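/- arXiv:1001.1528 — 9 statements merged into one kernel-verified Lean document; each statement's English description precedes it below -/
import Mathlib

section
/- Let q₀ ∈ (0, π/2), c₀ ∈ (0, q₀/2), and let c₁, c₂ > 0 satisfy 3πc₂/c₁ < min{q₀, c₀}. Let s > 0, let Γ ⊆ ℝ² satisfy Γ ∩ closedBall(0, c₁·s) = ∅, and let x ∈ ℝ² with ‖x‖ ≤ c₂·s. Then RG_{q₀,c₀}(Γ) ⊆ RG_{q₀/2,c₀/2,x}(Γ); that is, every (q₀,c₀)-regeneration site of Γ as seen from the origin is a (q₀/2,c₀/2)-regeneration site of Γ as seen from the observation point x. -/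
open InnerProductGeometry Real Set Metric Pointwise RealInnerProductSpace

/-- `v` rotated counterclockwise by `π/2`. -/
noncomputable def perp (v : EuclideanSpace ℝ (Fin 2)) : EuclideanSpace ℝ (Fin 2) :=
  (WithLp.equiv 2 (Fin 2 → ℝ)).symm ![-(v 1), v 0]

/-- The forward cone `C^F_{π/2 - q}(v)`. -/
noncomputable def coneF (q : ℝ) (v : EuclideanSpace ℝ (Fin 2)) :
    Set (EuclideanSpace ℝ (Fin 2)) :=
  {v} ∪ {w | w ≠ v ∧ angle (w - v) (perp v) ≤ π / 2 - q}

/-- The backward cone `C^B_{π/2 - q}(v)`. -/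
noncomputable def coneB (q : ℝ) (v : EuclideanSpace ℝ (Fin 2)) :
    Set (EuclideanSpace ℝ (Fin 2)) :=
  {v} ∪ {w | w ≠ v ∧ angle (w - v) (-(perp v)) ≤ π / 2 - q}

/-- The cone `W_{v,c}` about direction `v` with apex `0` and half-aperture `c`. -/
noncomputable def coneW (v : EuclideanSpace ℝ (Fin 2)) (c : ℝ) :
    Set (EuclideanSpace ℝ (Fin 2)) :=
  {0} ∪ {z | z ≠ 0 ∧ angle z v ≤ c}

/-- The set of `(q,c)`-regeneration sites of `Γ`, as seen from the origin. -/
noncomputable def RG (q c : ℝ) (Γ : Set (EuclideanSpace ℝ (Fin 2))) :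
    Set (EuclideanSpace ℝ (Fin 2)) :=
  {v | v ∈ Γ ∧ v ≠ 0 ∧ Γ ∩ coneW v c ⊆ coneF q v ∪ coneB q v}

/-- The set of `(q,c)`-regeneration sites of `Γ` as seen from `x`:
`RG_{q,c,x}(Γ) = x + RG_{q,c}(Γ - x)`. -/
noncomputable def RGat (q c : ℝ) (x : EuclideanSpace ℝ (Fin 2))
    (Γ : Set (EuclideanSpace ℝ (Fin 2))) : Set (EuclideanSpace ℝ (Fin 2)) :=
  (fun z => x + z) '' RG q c ((fun z => z - x) '' Γ)

section Aux

lemma my_inner_two (u v : EuclideanSpace ℝ (Fin 2)) : ⟪u, v⟫ = u 0 * v 0 + u 1 * v 1 := by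
  simp [PiLp.inner_apply, Fin.sum_univ_two, RCLike.inner_apply]
  ring

lemma my_perp_apply (v : EuclideanSpace ℝ (Fin 2)) : perp v 0 = -(v 1) ∧ perp v 1 = v 0 := by
  constructor <;> rfl

lemma my_perp_inner (u v : EuclideanSpace ℝ (Fin 2)) : ⟪perp u, perp v⟫ = ⟪u, v⟫ := by
  rw [my_inner_two, my_inner_two, (my_perp_apply u).1, (my_perp_apply u).2,
    (my_perp_apply v).1, (my_perp_apply v).2]
  ring

lemma my_perp_norm (v : EuclideanSpace ℝ (Fin 2)) : ‖perp v‖ = ‖v‖ := by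
  have h := my_perp_inner v v
  rw [real_inner_self_eq_norm_mul_norm, real_inner_self_eq_norm_mul_norm] at h
  exact mul_self_injective (norm_nonneg _) (norm_nonneg _) h
where
  mul_self_injective {a b : ℝ} (ha : 0 ≤ a) (hb : 0 ≤ b) (h : a * a = b * b) : a = b := by
    nlinarith

lemma my_perp_ne_zero {v : EuclideanSpace ℝ (Fin 2)} (hv : v ≠ 0) : perp v ≠ 0 := by
  intro h
  apply hv
  have := my_perp_norm v
  rw [h, norm_zero] at this
  exact norm_eq_zero.mp this.symm

lemma my_angle_perp (u v : EuclideanSpace ℝ (Fin 2)) : angle (perp u) (perp v) = angle u v := by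
  unfold InnerProductGeometry.angle
  rw [my_perp_inner, my_perp_norm, my_perp_norm]

lemma my_abs_toReal_add (θ ψ : Real.Angle) :
    |(θ + ψ).toReal| ≤ |θ.toReal| + |ψ.toReal| := by
  set a := θ.toReal with ha
  set b := ψ.toReal with hb
  have ha1 : -π < a := θ.neg_pi_lt_toReal
  have ha2 : a ≤ π := θ.toReal_le_pi
  have hb1 : -π < b := ψ.neg_pi_lt_toReal
  have hb2 : b ≤ π := ψ.toReal_le_pi
  have hsum : θ + ψ = ((a + b : ℝ) : Real.Angle) := by
    rw [Real.Angle.coe_add, θ.coe_toReal, ψ.coe_toReal]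
  rcases le_or_gt (a + b) π with h1 | h1
  · rcases lt_or_ge (-π) (a + b) with h2 | h2
    · rw [hsum, Real.Angle.toReal_coe_eq_self_iff.2 ⟨h2, h1⟩]
      exact abs_add_le a b
    · have hπ := Real.pi_pos
      have heq : ((a + b : ℝ) : Real.Angle) = ((a + b + 2 * π : ℝ) : Real.Angle) := by
        rw [Real.Angle.coe_add (a + b) (2 * π), Real.Angle.coe_two_pi, add_zero]
      rw [hsum, heq, Real.Angle.toReal_coe_eq_self_iff.2 ⟨by linarith, by linarith⟩]
      rw [abs_of_nonneg (by linarith)]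
      have := neg_abs_le a
      have := neg_abs_le b
      linarith
  · have hπ := Real.pi_pos
    have heq : ((a + b : ℝ) : Real.Angle) = ((a + b - 2 * π : ℝ) : Real.Angle) := by
      rw [Real.Angle.coe_sub (a + b) (2 * π), Real.Angle.coe_two_pi, sub_zero]
    rw [hsum, heq, Real.Angle.toReal_coe_eq_self_iff.2 ⟨by linarith, by linarith⟩]
    rw [abs_of_nonpos (by linarith), neg_sub]
    have := le_abs_self a
    have := le_abs_self b
    linarith

lemma my_angle_triangle {x y z : EuclideanSpace ℝ (Fin 2)}
    (hx : x ≠ 0) (hy : y ≠ 0) (hz : z ≠ 0) :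
    angle x z ≤ angle x y + angle y z := by
  haveI : Fact (Module.finrank ℝ (EuclideanSpace ℝ (Fin 2)) = 2) :=
    ⟨finrank_euclideanSpace_fin⟩
  set o : Orientation ℝ (EuclideanSpace ℝ (Fin 2)) (Fin 2) :=
    (EuclideanSpace.basisFun (Fin 2) ℝ).toBasis.orientation with ho
  rw [o.angle_eq_abs_oangle_toReal hx hz, o.angle_eq_abs_oangle_toReal hx hy,
    o.angle_eq_abs_oangle_toReal hy hz, ← o.oangle_add hx hy hz]
  exact my_abs_toReal_add _ _

lemma my_tilt (w x : EuclideanSpace ℝ (Fin 2)) (h : ‖x‖ < ‖w‖) :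
    angle w (w - x) * ‖w - x‖ ≤ π / 2 * ‖x‖ := by
  have hπ := Real.pi_pos
  have hw0 : (0:ℝ) < ‖w‖ := lt_of_le_of_lt (norm_nonneg x) h
  have hwx : ‖w‖ - ‖x‖ ≤ ‖w - x‖ := norm_sub_norm_le w x
  have hwx0 : (0:ℝ) < ‖w - x‖ := by linarith
  set θ := angle w (w - x) with hθ
  have hθ0 : 0 ≤ θ := angle_nonneg w (w - x)
  have hθπ : θ ≤ π := angle_le_pi w (w - x)
  -- cos θ > 0
  have h1 := cos_angle_mul_norm_mul_norm w (w - x)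
  have h2 : ⟪w, w - x⟫ = ‖w‖ ^ 2 - ⟪w, x⟫ := by
    rw [inner_sub_right, real_inner_self_eq_norm_sq]
  have h3 : ⟪w, x⟫ ≤ ‖w‖ * ‖x‖ := real_inner_le_norm w x
  have hcos : 0 < Real.cos θ := by nlinarith [mul_pos hw0 hwx0]
  have hθhalf : θ ≤ π / 2 := by
    by_contra h'
    push_neg at h'
    have : Real.cos θ ≤ 0 :=
      Real.cos_nonpos_of_pi_div_two_le_of_le (le_of_lt h') (by linarith)
    linarith
  -- sin θ * ‖w - x‖ ≤ ‖x‖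
  have h4 := sin_angle_mul_norm_mul_norm w (w - x)
  have hA : ⟪w, w⟫ * ⟪w - x, w - x⟫ - ⟪w, w - x⟫ * ⟪w, w - x⟫
      = (w 1 * x 0 - w 0 * x 1) ^ 2 := by
    simp only [my_inner_two, PiLp.sub_apply]
    ring
  have hw2 : ‖w‖ ^ 2 = w 0 ^ 2 + w 1 ^ 2 := by
    rw [← real_inner_self_eq_norm_sq, my_inner_two]; ring
  have hx2 : ‖x‖ ^ 2 = x 0 ^ 2 + x 1 ^ 2 := by
    rw [← real_inner_self_eq_norm_sq, my_inner_two]; ring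
  have hCS : (w 1 * x 0 - w 0 * x 1) ^ 2 ≤ (‖w‖ * ‖x‖) ^ 2 := by
    rw [mul_pow, hw2, hx2]
    nlinarith [sq_nonneg (w 0 * x 0 + w 1 * x 1)]
  have hsqrt : Real.sqrt (⟪w, w⟫ * ⟪w - x, w - x⟫ - ⟪w, w - x⟫ * ⟪w, w - x⟫)
      ≤ ‖w‖ * ‖x‖ := by
    rw [hA]
    calc Real.sqrt ((w 1 * x 0 - w 0 * x 1) ^ 2)
        ≤ Real.sqrt ((‖w‖ * ‖x‖) ^ 2) := Real.sqrt_le_sqrt hCS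
      _ = |‖w‖ * ‖x‖| := Real.sqrt_sq_eq_abs _
      _ = ‖w‖ * ‖x‖ := abs_of_nonneg (by positivity)
  have hsin : Real.sin θ * ‖w - x‖ ≤ ‖x‖ := by
    have h5 : Real.sin θ * (‖w‖ * ‖w - x‖) ≤ ‖w‖ * ‖x‖ := by
      rw [h4]; exact hsqrt
    nlinarith
  have hj : 2 / π * θ ≤ Real.sin θ := Real.mul_le_sin hθ0 hθhalf
  have hsin0 : 0 ≤ Real.sin θ := Real.sin_nonneg_of_nonneg_of_le_pi hθ0 hθπ
  have hj2 : 2 * θ ≤ π * Real.sin θ := by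
    have h' := hj
    rw [div_mul_eq_mul_div, div_le_iff₀ hπ] at h'
    linarith
  nlinarith [mul_le_mul_of_nonneg_right hj2 (le_of_lt hwx0),
    mul_le_mul_of_nonneg_left hsin (le_of_lt hπ)]

end Aux

/-- Every `(q₀,c₀)`-regeneration site of `Γ` as seen from the origin is a
`(q₀/2,c₀/2)`-regeneration site of `Γ` as seen from the observation point `x`. -/
theorem stmt0 (q₀ c₀ c₁ c₂ s : ℝ)
    (hq₀ : 0 < q₀) (hq₀' : q₀ < π / 2) (hc₀ : 0 < c₀) (hc₀' : c₀ < q₀ / 2)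
    (hc₁ : 0 < c₁) (hc₂ : 0 < c₂) (hcc : 3 * π * c₂ / c₁ < min q₀ c₀) (hs : 0 < s)
    (Γ : Set (EuclideanSpace ℝ (Fin 2)))
    (hΓ : Γ ∩ closedBall 0 (c₁ * s) = ∅)
    (x : EuclideanSpace ℝ (Fin 2)) (hx : ‖x‖ ≤ c₂ * s) :
    RG q₀ c₀ Γ ⊆ RGat (q₀ / 2) (c₀ / 2) x Γ := by
  have hπ := Real.pi_pos
  -- basic numeric facts
  have hεq : 3 * π * c₂ < q₀ * c₁ := by
    have := lt_of_lt_of_le hcc (min_le_left q₀ c₀)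
    rwa [div_lt_iff₀ hc₁] at this
  have hεc : 3 * π * c₂ < c₀ * c₁ := by
    have := lt_of_lt_of_le hcc (min_le_right q₀ c₀)
    rwa [div_lt_iff₀ hc₁] at this
  have hc21 : 6 * c₂ < c₁ := by nlinarith
  -- points of Γ are far from the origin
  have hΓ' : ∀ w ∈ Γ, c₁ * s < ‖w‖ := by
    intro w hw
    by_contra h
    push_neg at h
    have : w ∈ Γ ∩ closedBall 0 (c₁ * s) := ⟨hw, mem_closedBall_zero_iff.2 h⟩
    rw [hΓ] at this
    exact this
  have hx' : ‖x‖ < c₁ * s / 6 := lt_of_le_of_lt hx (by nlinarith)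
  -- quantitative facts for points of Γ
  have hfar : ∀ w ∈ Γ, ‖x‖ < ‖w‖ ∧ 5 / 6 * (c₁ * s) ≤ ‖w - x‖ := by
    intro w hw
    have h1 := hΓ' w hw
    have h2 := norm_sub_norm_le w x
    constructor
    · nlinarith
    · nlinarith
  have hne : ∀ w ∈ Γ, w ≠ 0 ∧ w - x ≠ 0 := by
    intro w hw
    obtain ⟨h1, h2⟩ := hfar w hw
    have h3 : (0:ℝ) < c₁ * s := mul_pos hc₁ hs
    constructor
    · intro h; rw [h, norm_zero] at h1; exact absurd (norm_nonneg x) (not_le.2 h1)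
    · intro h; rw [h, norm_zero] at h2; nlinarith
  -- the tilt of any point of Γ, as seen from x instead of 0, is small
  have key : ∀ w ∈ Γ, angle w (w - x) < q₀ / 5 ∧ angle w (w - x) < c₀ / 5 := by
    intro w hw
    obtain ⟨h1, h2⟩ := hfar w hw
    have h3 := my_tilt w x h1
    have h4 : ‖x‖ ≤ c₂ * s := hx
    have h5 := angle_nonneg w (w - x)
    constructor <;> nlinarith [mul_pos hc₁ hs]
  -- main argument
  rintro v ⟨hvΓ, hv0, hvreg⟩
  obtain ⟨hv0', hvx0⟩ := hne v hvΓ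
  obtain ⟨hvq, hvc⟩ := key v hvΓ
  refine ⟨v - x, ⟨⟨v, hvΓ, rfl⟩, hvx0, ?_⟩, by show x + (v - x) = v; rw [add_comm, sub_add_cancel]⟩
  rintro z ⟨⟨w, hwΓ, rfl⟩, hzW⟩
  obtain ⟨hw0, hwx0⟩ := hne w hwΓ
  obtain ⟨hwq, hwc⟩ := key w hwΓ
  -- if w = v we are done
  by_cases hwv : w = v
  · subst hwv
    exact Or.inl (Or.inl rfl)
  have hwvne : w - x ≠ v - x := fun h => hwv (by
    have := congrArg (fun z => z + x) h
    simpa using this)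
  -- extract the angle bound from coneW membership
  have hang : angle (w - x) (v - x) ≤ c₀ / 2 := by
    rcases hzW with h | ⟨_, h⟩
    · exact absurd h hwx0
    · exact h
  -- w lies in the original cone W_{v,c₀}
  have hwW : w ∈ coneW v c₀ := by
    right
    refine ⟨hw0, ?_⟩
    have t1 : angle w v ≤ angle w (w - x) + angle (w - x) v :=
      my_angle_triangle hw0 hwx0 hv0'
    have t2 : angle (w - x) v ≤ angle (w - x) (v - x) + angle (v - x) v :=
      my_angle_triangle hwx0 hvx0 hv0'
    have t3 : angle (v - x) v = angle v (v - x) := angle_comm _ _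
    linarith
  have hcone := hvreg ⟨hwΓ, hwW⟩
  have hsub : w - x - (v - x) = w - v := by abel
  have hpv : perp v ≠ 0 := my_perp_ne_zero hv0'
  have hpvx : perp (v - x) ≠ 0 := my_perp_ne_zero hvx0
  have hwv0 : w - v ≠ 0 := sub_ne_zero.2 hwv
  have hperpangle : angle (perp v) (perp (v - x)) ≤ q₀ / 5 := by
    rw [my_angle_perp]
    have : angle (v - x) v = angle v (v - x) := angle_comm _ _
    have h := my_angle_triangle hv0' hv0' hvx0
    exact le_of_lt (by rw [angle_comm] at hvq ⊢; exact hvq)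
  rcases hcone with (h | ⟨_, h⟩) | (h | ⟨_, h⟩)
  · exact absurd h hwv
  · -- forward cone
    left; right
    refine ⟨hwvne, ?_⟩
    rw [hsub]
    have t : angle (w - v) (perp (v - x)) ≤
        angle (w - v) (perp v) + angle (perp v) (perp (v - x)) :=
      my_angle_triangle hwv0 hpv hpvx
    linarith
  · exact absurd h hwv
  · -- backward cone
    right; right
    refine ⟨hwvne, ?_⟩
    rw [hsub]
    have t : angle (w - v) (-(perp (v - x))) ≤
        angle (w - v) (-(perp v)) + angle (-(perp v)) (-(perp (v - x))) :=
      my_angle_triangle hwv0 (neg_ne_zero.2 hpv) (neg_ne_zero.2 hpvx)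
    rw [angle_neg_neg] at t
    linarith
end

section
/- Let c₀ ∈ (0, π/2) and let c₁, c₂, s > 0 satisfy 3πc₂ < c₀·c₁. Let x, v ∈ ℝ² satisfy ‖x‖ ≤ c₂·s and ‖v‖ ≥ c₁·s. Then (x + W_{v−x, c₀/2}) ∩ (ℝ² \ closedBall(0, c₁·s)) ⊆ W_{v, c₀}; that is, every point of the cone with apex x and axis direction v−x and half-aperture c₀/2 that lies outside the closed ball of radius c₁·s about the origin belongs to the cone with apex 0, axis direction v and half-aperture c₀. -/
open InnerProductGeometry Real Set Metric Pointwise RealInnerProductSpace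

variable {V : Type*} [NormedAddCommGroup V] [InnerProductSpace ℝ V]

lemma arccos_antitone : Antitone Real.arccos := fun a b h => by
  simp only [Real.arccos_eq_pi_div_two_sub_arcsin]
  linarith [Real.monotone_arcsin h]

lemma angle_triangle_unit (u v w : V) (hu : ‖u‖ = 1) (hv : ‖v‖ = 1) (hw : ‖w‖ = 1) :
    angle u w ≤ angle u v + angle v w := by
  set a := ⟪u, v⟫ with ha
  set b := ⟪v, w⟫ with hb
  set c := ⟪u, w⟫ with hc
  have ha1 : |a| ≤ 1 := by simpa [hu, hv] using abs_real_inner_le_norm u v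
  have hb1 : |b| ≤ 1 := by simpa [hv, hw] using abs_real_inner_le_norm v w
  have hc1 : |c| ≤ 1 := by simpa [hu, hw] using abs_real_inner_le_norm u w
  have hvv : ⟪v, v⟫ = 1 := by
    simp [real_inner_self_eq_norm_mul_norm, hv]
  have hinner : ⟪u - a • v, w - b • v⟫ = c - a * b := by
    simp only [inner_sub_left, inner_sub_right, real_inner_smul_left, real_inner_smul_right,
      hvv]
    rw [← ha, ← hb, ← hc]
    ring
  have hnu : ‖u - a • v‖ = Real.sqrt (1 - a ^ 2) := by
    rw [← Real.sqrt_sq (norm_nonneg (u - a • v)), norm_sub_sq_real]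
    congr 1
    rw [real_inner_smul_right, norm_smul, ← ha]
    simp [hu, hv]
    ring
  have hnw : ‖w - b • v‖ = Real.sqrt (1 - b ^ 2) := by
    rw [← Real.sqrt_sq (norm_nonneg (w - b • v)), norm_sub_sq_real]
    congr 1
    rw [real_inner_smul_right, norm_smul, real_inner_comm, ← hb]
    simp [hw, hv]
    ring
  have key : |c - a * b| ≤ Real.sqrt (1 - a ^ 2) * Real.sqrt (1 - b ^ 2) := by
    have h := abs_real_inner_le_norm (u - a • v) (w - b • v)
    rwa [hinner, hnu, hnw] at h
  have hAuv : angle u v = Real.arccos a := by simp [angle, hu, hv, ha]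
  have hAvw : angle v w = Real.arccos b := by simp [angle, hv, hw, hb]
  have hAuw : angle u w = Real.arccos c := by simp [angle, hu, hw, hc]
  rw [hAuv, hAvw, hAuw]
  rcases le_or_gt (Real.arccos a + Real.arccos b) π with hS | hS
  · have hcos : Real.cos (Real.arccos a + Real.arccos b)
        = a * b - Real.sqrt (1 - a ^ 2) * Real.sqrt (1 - b ^ 2) := by
      rw [Real.cos_add, Real.cos_arccos (by linarith [(abs_le.1 ha1).1]) (by linarith [(abs_le.1 ha1).2]),
        Real.cos_arccos (by linarith [(abs_le.1 hb1).1]) (by linarith [(abs_le.1 hb1).2]),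
        Real.sin_arccos, Real.sin_arccos]
    have hle : Real.cos (Real.arccos a + Real.arccos b) ≤ c := by
      rw [hcos]; linarith [(abs_le.1 key).1]
    calc Real.arccos c ≤ Real.arccos (Real.cos (Real.arccos a + Real.arccos b)) :=
          arccos_antitone hle
      _ = Real.arccos a + Real.arccos b := by
          rw [Real.arccos_cos (by linarith [Real.arccos_nonneg a, Real.arccos_nonneg b]) hS]
  · linarith [Real.arccos_le_pi c]

lemma angle_triangle' (x y z : V) (hx : x ≠ 0) (hy : y ≠ 0) (hz : z ≠ 0) :
    angle x z ≤ angle x y + angle y z := by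
  have hx' : (0:ℝ) < ‖x‖⁻¹ := by simp [norm_pos_iff, hx]
  have hy' : (0:ℝ) < ‖y‖⁻¹ := by simp [norm_pos_iff, hy]
  have hz' : (0:ℝ) < ‖z‖⁻¹ := by simp [norm_pos_iff, hz]
  have e1 : angle x z = angle (‖x‖⁻¹ • x) (‖z‖⁻¹ • z) := by
    rw [angle_smul_left_of_pos _ _ hx', angle_smul_right_of_pos _ _ hz']
  have e2 : angle x y = angle (‖x‖⁻¹ • x) (‖y‖⁻¹ • y) := by
    rw [angle_smul_left_of_pos _ _ hx', angle_smul_right_of_pos _ _ hy']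
  have e3 : angle y z = angle (‖y‖⁻¹ • y) (‖z‖⁻¹ • z) := by
    rw [angle_smul_left_of_pos _ _ hy', angle_smul_right_of_pos _ _ hz']
  rw [e1, e2, e3]
  exact angle_triangle_unit _ _ _ (norm_smul_inv_norm hx) (norm_smul_inv_norm hy)
    (norm_smul_inv_norm hz)

lemma angle_sub_le' (a x : V) (ha : a ≠ 0) (hax : a - x ≠ 0) :
    angle a (a - x) ≤ π * ‖x‖ / (‖a‖ + ‖a - x‖) := by
  set A := ‖a‖ with hA
  set B := ‖a - x‖ with hB
  have hApos : 0 < A := norm_pos_iff.2 ha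
  have hBpos : 0 < B := norm_pos_iff.2 hax
  set t := ⟪a, a - x⟫ with ht
  have hX : ‖x‖ ^ 2 = A ^ 2 + B ^ 2 - 2 * t := by
    have h1 : a - (a - x) = x := by abel
    have h2 := norm_sub_sq_real a (a - x)
    rw [h1] at h2
    rw [h2, ← hA, ← hB, ← ht]; ring
  have htl : -(A * B) ≤ t := by
    have := abs_real_inner_le_norm a (a - x)
    linarith [(abs_le.1 this).1]
  set γ := angle a (a - x) with hγ
  have hγ0 : 0 ≤ γ := angle_nonneg _ _
  have hγπ : γ ≤ π := angle_le_pi _ _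
  have hcos : Real.cos γ = t / (A * B) := cos_angle a (a - x)
  have hsin2 : Real.sin (γ / 2) ^ 2 = (1 - Real.cos γ) / 2 := by
    rw [Real.sin_sq_eq_half_sub]
    rw [show 2 * (γ / 2) = γ by ring]; ring
  have hsnn : 0 ≤ Real.sin (γ / 2) :=
    Real.sin_nonneg_of_nonneg_of_le_pi (by linarith) (by linarith [Real.pi_pos])
  have hbound2 : Real.sin (γ / 2) ^ 2 ≤ (‖x‖ / (A + B)) ^ 2 := by
    rw [hsin2, hcos, div_pow]
    rw [div_le_div_iff₀ (by norm_num) (by positivity)]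
    have hc : -1 ≤ t / (A * B) := by
      rw [neg_le, ← neg_div, div_le_one (by positivity)]
      linarith
    have hexp : t / (A * B) * (A * B) = t := by field_simp
    nlinarith [sq_nonneg (A - B), mul_pos hApos hBpos,
      mul_le_mul_of_nonneg_right hc (sq_nonneg (A - B))]
  have hbound : Real.sin (γ / 2) ≤ ‖x‖ / (A + B) := by
    have hr : 0 ≤ ‖x‖ / (A + B) := by positivity
    nlinarith [hbound2, hsnn, hr]
  have hjordan : γ ≤ π * Real.sin (γ / 2) := by
    have h := Real.mul_le_sin (x := γ / 2) (by linarith) (by linarith)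
    have hπ : (0:ℝ) < π := Real.pi_pos
    have h2 := mul_le_mul_of_nonneg_left h hπ.le
    calc γ = π * (2 / π * (γ / 2)) := by field_simp
      _ ≤ π * Real.sin (γ / 2) := h2
  calc γ ≤ π * Real.sin (γ / 2) := hjordan
    _ ≤ π * (‖x‖ / (A + B)) := by
        exact mul_le_mul_of_nonneg_left hbound Real.pi_pos.le
    _ = π * ‖x‖ / (A + B) := by ring

/-- Every point of the cone with apex `x`, axis direction `v - x` and half-aperture `c₀/2`
lying outside the closed ball of radius `c₁ * s` about the origin belongs to the cone
with apex `0`, axis direction `v` and half-aperture `c₀`. -/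
theorem stmt1 (c₀ c₁ c₂ s : ℝ) (hc₀ : 0 < c₀) (hc₀' : c₀ < π / 2)
    (hc₁ : 0 < c₁) (hc₂ : 0 < c₂) (hs : 0 < s) (h : 3 * π * c₂ < c₀ * c₁)
    (x v : EuclideanSpace ℝ (Fin 2)) (hx : ‖x‖ ≤ c₂ * s) (hv : c₁ * s ≤ ‖v‖) :
    ((fun z => x + z) '' coneW (v - x) (c₀ / 2)) ∩
      (closedBall (0 : EuclideanSpace ℝ (Fin 2)) (c₁ * s))ᶜ ⊆ coneW v c₀ := by
  have hπ : (0:ℝ) < π := Real.pi_pos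
  have hc21 : c₂ < c₁ := by nlinarith
  rintro y ⟨⟨z, hz, rfl⟩, hball⟩
  simp only [mem_compl_iff, mem_closedBall, dist_zero_right, not_le] at hball
  -- hball : c₁ * s < ‖x + z‖
  have hyx : x + z - x = z := by abel
  have hz0 : z ≠ 0 := by
    rintro rfl
    simp only [add_zero] at hball
    nlinarith
  have hza : angle z (v - x) ≤ c₀ / 2 := by
    rcases hz with h0 | ⟨_, h1⟩
    · exact absurd h0 hz0
    · exact h1
  have hy0 : x + z ≠ 0 := by
    intro h0
    rw [h0] at hball
    simp at hball
    nlinarith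
  have hznorm : (2 * c₁ - c₂) * s ≤ ‖x + z‖ + ‖z‖ := by
    have := norm_sub_norm_le (x + z) x
    rw [hyx] at this
    nlinarith
  have hv0 : v ≠ 0 := by
    intro h0
    rw [h0, norm_zero] at hv
    nlinarith
  have hvnorm : (2 * c₁ - c₂) * s ≤ ‖v‖ + ‖v - x‖ := by
    have := norm_sub_norm_le v x
    have h2 : ‖v - x‖ ≥ ‖v‖ - ‖x‖ := this
    nlinarith
  have hvx0 : v - x ≠ 0 := by
    intro h0
    have h1 : ‖v‖ - ‖x‖ ≤ ‖v - x‖ := norm_sub_norm_le v x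
    rw [h0, norm_zero] at h1
    nlinarith
  have hdpos : (0:ℝ) < (2 * c₁ - c₂) * s := by nlinarith
  -- the two perturbation bounds
  have hb1 : angle (x + z) z ≤ π * c₂ * s / ((2 * c₁ - c₂) * s) := by
    have := angle_sub_le' (x + z) x hy0 (by rw [hyx]; exact hz0)
    rw [hyx] at this
    refine this.trans ?_
    exact div_le_div₀ (by positivity) (by nlinarith) hdpos hznorm
  have hb3 : angle v (v - x) ≤ π * c₂ * s / ((2 * c₁ - c₂) * s) := by
    have := angle_sub_le' v x hv0 hvx0
    refine this.trans ?_
    exact div_le_div₀ (by positivity) (by nlinarith) hdpos hvnorm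
  have hsimp : π * c₂ * s / ((2 * c₁ - c₂) * s) = π * c₂ / (2 * c₁ - c₂) := by
    rw [mul_div_mul_right _ _ (ne_of_gt hs)]
  have hquarter : π * c₂ / (2 * c₁ - c₂) ≤ c₀ / 4 := by
    rw [div_le_div_iff₀ (by nlinarith) (by norm_num)]
    nlinarith
  have tri1 : angle (x + z) v ≤ angle (x + z) z + angle z v :=
    angle_triangle' _ _ _ hy0 hz0 hv0
  have tri2 : angle z v ≤ angle z (v - x) + angle (v - x) v :=
    angle_triangle' _ _ _ hz0 hvx0 hv0
  have hcomm : angle (v - x) v = angle v (v - x) := angle_comm _ _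
  right
  refine ⟨hy0, ?_⟩
  rw [hsimp] at hb1 hb3
  calc angle (x + z) v ≤ angle (x + z) z + (angle z (v - x) + angle (v - x) v) := by
        linarith
    _ ≤ c₀ / 4 + (c₀ / 2 + c₀ / 4) := by
        rw [hcomm]; gcongr <;> linarith
    _ = c₀ := by ring
end

section
/- Let r > 0, θ > 0, and let k, l be nonnegative integers with l ≥ k + 2 and (l+1)·θ ≤ π. Let u, v ∈ ℝ² be nonzero with ‖u‖ ≥ r, ‖v‖ ≥ r, and suppose k·θ ≤ arg u ≤ (k+1)·θ and l·θ ≤ arg v ≤ (l+1)·θ. Then ‖v − u‖ ≥ (2/π)·(l − k − 1)·θ·r. (That is: two points of norm at least r lying in angular sectors of aperture θ that are at least two sectors apart are at Euclidean distance at least (2/π)·(l−k−1)·θ·r.) -/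
open Real

/-- Two points of norm at least `r` lying in angular sectors of aperture `θ`
that are at least two sectors apart are at Euclidean distance at least
`(2/π)·(l - k - 1)·θ·r`. -/
theorem stmt3 (r θ : ℝ) (hr : 0 < r) (hθ : 0 < θ) (k l : ℕ) (hkl : k + 2 ≤ l)
    (hlθ : ((l : ℝ) + 1) * θ ≤ π) (u v : ℂ) (hu : u ≠ 0) (hv : v ≠ 0)
    (hur : r ≤ ‖u‖) (hvr : r ≤ ‖v‖)
    (hau1 : (k : ℝ) * θ ≤ u.arg) (hau2 : u.arg ≤ ((k : ℝ) + 1) * θ)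
    (hav1 : (l : ℝ) * θ ≤ v.arg) (hav2 : v.arg ≤ ((l : ℝ) + 1) * θ) :
    (2 / π) * ((l : ℝ) - (k : ℝ) - 1) * θ * r ≤ ‖v - u‖ := by
  have hπ := Real.pi_pos
  set a := ‖u‖ with ha
  set b := ‖v‖ with hb
  have ha0 : 0 < a := lt_of_lt_of_le hr hur
  have hb0 : 0 < b := lt_of_lt_of_le hr hvr
  set δ : ℝ := v.arg - u.arg with hδ
  have hkl' : (k : ℝ) + 2 ≤ (l : ℝ) := by exact_mod_cast hkl
  have hδ1 : ((l : ℝ) - (k : ℝ) - 1) * θ ≤ δ := by nlinarith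
  have hδ0 : 0 < δ := lt_of_lt_of_le (by nlinarith) hδ1
  have hk0 : (0:ℝ) ≤ (k : ℝ) * θ := by positivity
  have hδπ : δ ≤ π := by nlinarith
  -- express real/imag parts via arg
  have hre_u : u.re = a * Real.cos u.arg := by
    rw [Complex.cos_arg hu, ha]
    field_simp [norm_ne_zero_iff.mpr hu]
  have him_u : u.im = a * Real.sin u.arg := by
    rw [Complex.sin_arg, ha]
    field_simp [norm_ne_zero_iff.mpr hu]
  have hre_v : v.re = b * Real.cos v.arg := by
    rw [Complex.cos_arg hv, hb]
    field_simp [norm_ne_zero_iff.mpr hv]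
  have him_v : v.im = b * Real.sin v.arg := by
    rw [Complex.sin_arg, hb]
    field_simp [norm_ne_zero_iff.mpr hv]
  have hnsq : ‖v - u‖ ^ 2 = b ^ 2 + a ^ 2 - 2 * (a * b * Real.cos δ) := by
    rw [Complex.sq_norm, Complex.normSq_sub]
    have h1 : Complex.normSq v = b ^ 2 := by
      rw [hb, Complex.sq_norm]
    have h2 : Complex.normSq u = a ^ 2 := by
      rw [ha, Complex.sq_norm]
    have h3 : (v * (starRingEnd ℂ) u).re = a * b * Real.cos δ := by
      simp only [Complex.mul_re, Complex.conj_re, Complex.conj_im, hδ,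
        Real.cos_sub, hre_u, him_u, hre_v, him_v]
      ring
    rw [h1, h2, h3]
  set s : ℝ := Real.sin (δ / 2) with hs
  have hs0 : 0 ≤ s := Real.sin_nonneg_of_nonneg_of_le_pi (by linarith) (by linarith)
  have hcos : Real.cos δ = 1 - 2 * s ^ 2 := by
    have h2 : Real.cos (2 * (δ / 2)) = 2 * Real.cos (δ / 2) ^ 2 - 1 := Real.cos_two_mul _
    have h3 : Real.sin (δ / 2) ^ 2 + Real.cos (δ / 2) ^ 2 = 1 := Real.sin_sq_add_cos_sq _
    have : (2 : ℝ) * (δ / 2) = δ := by ring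
    rw [this] at h2
    rw [hs]; linarith
  -- chord lower bound: ‖v - u‖ ≥ 2 r s
  have hsq : (2 * r * s) ^ 2 ≤ ‖v - u‖ ^ 2 := by
    rw [hnsq, hcos]
    have hab : r * r ≤ a * b := mul_le_mul hur hvr (le_of_lt hr) (le_of_lt ha0)
    have key : 0 ≤ 4 * s ^ 2 * (a * b - r * r) := mul_nonneg (by positivity) (by linarith)
    nlinarith [key, sq_nonneg (a - b)]
  have hchord : 2 * r * s ≤ ‖v - u‖ := by
    have h1 : 0 ≤ 2 * r * s := by positivity
    have h2 : 0 ≤ ‖v - u‖ := norm_nonneg _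
    have := Real.sqrt_le_sqrt hsq
    rwa [Real.sqrt_sq h1, Real.sqrt_sq h2] at this
  -- Jordan inequality
  have hjord : 2 / π * (δ / 2) ≤ s :=
    Real.mul_le_sin (by linarith) (by linarith)
  calc (2 / π) * ((l : ℝ) - (k : ℝ) - 1) * θ * r
      ≤ (2 / π) * δ * r := by
        have h : (2 / π) * (((l : ℝ) - (k : ℝ) - 1) * θ) ≤ (2 / π) * δ :=
          mul_le_mul_of_nonneg_left hδ1 (by positivity)
        have := mul_le_mul_of_nonneg_right h (le_of_lt hr)
        linarith [this]
    _ = 2 * r * (2 / π * (δ / 2)) := by ring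
    _ ≤ 2 * r * s := by
        have := mul_le_mul_of_nonneg_left hjord (by positivity : (0:ℝ) ≤ 2 * r)
        linarith
    _ ≤ ‖v - u‖ := hchord
end

section
/- Let r, L > 0, let d ∈ ℝ² be a unit vector, and let ψ, φ > 0 satisfy ψ + φ ≤ π and L < (2/π)·r·φ. Set A := {0} ∪ {z ∈ ℝ² : z ≠ 0 and ∠(z,d) ≤ ψ}. Let Γ, Γ' ⊆ ℝ² be compact sets such that: Γ ∩ closedBall(0,r) = ∅ and Γ' ∩ closedBall(0,r) = ∅; closedBall(0,r) ⊆ convexHull ℝ Γ and closedBall(0,r) ⊆ convexHull ℝ Γ'; Γ \ A = Γ' \ A; every line segment [p,q] contained in the topological frontier of convexHull ℝ Γ satisfies ‖p − q‖ ≤ L, and likewise every line segment contained in the frontier of convexHull ℝ Γ' has length at most L. Then for every nonzero w ∈ ℝ² with ∠(w,d) ≥ ψ + φ, one has w ∈ frontier(convexHull ℝ Γ) if and only if w ∈ frontier(convexHull ℝ Γ'). -/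
open InnerProductGeometry Real Set Metric Pointwise RealInnerProductSpace

variable {V : Type*} [NormedAddCommGroup V] [InnerProductSpace ℝ V]

lemma arccos_le_arccos' {u v : ℝ} (h : u ≤ v) : Real.arccos v ≤ Real.arccos u := by
  unfold Real.arccos
  linarith [Real.monotone_arcsin h]

/-- Triangle inequality for unoriented angles, unit-vector case. -/
lemma angle_triangle_unit_s4 {x y z : V} (hx : ‖x‖ = 1) (hy : ‖y‖ = 1) (hz : ‖z‖ = 1) :
    angle x z ≤ angle x y + angle y z := by
  set a : ℝ := ⟪x, y⟫ with ha
  set b : ℝ := ⟪y, z⟫ with hb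
  set c : ℝ := ⟪x, z⟫ with hc
  have hax : angle x y = Real.arccos a := by
    rw [angle, ha, hx, hy]; norm_num
  have hbx : angle y z = Real.arccos b := by
    rw [angle, hb, hy, hz]; norm_num
  have hcx : angle x z = Real.arccos c := by
    rw [angle, hc, hx, hz]; norm_num
  have ha1 : |a| ≤ 1 := by
    simpa [hx, hy] using abs_real_inner_le_norm x y
  have hb1 : |b| ≤ 1 := by
    simpa [hy, hz] using abs_real_inner_le_norm y z
  have hc1 : |c| ≤ 1 := by
    simpa [hx, hz] using abs_real_inner_le_norm x z
  rw [abs_le] at ha1 hb1 hc1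
  have hkey : a * b - Real.sqrt (1 - a ^ 2) * Real.sqrt (1 - b ^ 2) ≤ c := by
    have hyy : ⟪y, y⟫ = 1 := by
      rw [real_inner_self_eq_norm_sq, hy]; norm_num
    have hzy : ⟪z, y⟫ = b := by rw [real_inner_comm]; try exact hb.symm
    have hxy : ⟪x, y⟫ = a := ha.symm
    have hinner : ⟪x - a • y, z - b • y⟫ = c - a * b := by
      rw [inner_sub_left, inner_sub_right, inner_sub_right, real_inner_smul_right,
        real_inner_smul_left, real_inner_smul_left, real_inner_smul_right, hyy, hxy]
      simp only [← hb, ← hc]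
      ring
    have hnx : ‖x - a • y‖ = Real.sqrt (1 - a ^ 2) := by
      have h2 : ‖x - a • y‖ ^ 2 = 1 - a ^ 2 := by
        rw [norm_sub_sq_real, hx, real_inner_smul_right, hxy, norm_smul, hy,
          Real.norm_eq_abs, mul_one, sq_abs]
        ring
      rw [← h2, Real.sqrt_sq (norm_nonneg _)]
    have hnz : ‖z - b • y‖ = Real.sqrt (1 - b ^ 2) := by
      have h2 : ‖z - b • y‖ ^ 2 = 1 - b ^ 2 := by
        rw [norm_sub_sq_real, hz, real_inner_smul_right, hzy, norm_smul, hy,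
          Real.norm_eq_abs, mul_one, sq_abs]
        ring
      rw [← h2, Real.sqrt_sq (norm_nonneg _)]
    have := abs_real_inner_le_norm (x - a • y) (z - b • y)
    rw [hinner, hnx, hnz, abs_le] at this
    linarith [this.1]
  rw [hax, hbx, hcx]
  rcases le_or_gt π (Real.arccos a + Real.arccos b) with hsum | hsum
  · exact le_trans (Real.arccos_le_pi c) hsum
  have h0 : (0:ℝ) ≤ Real.arccos a + Real.arccos b :=
    add_nonneg (Real.arccos_nonneg a) (Real.arccos_nonneg b)
  have hcoscos : Real.cos (Real.arccos a + Real.arccos b)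
      = a * b - Real.sqrt (1 - a ^ 2) * Real.sqrt (1 - b ^ 2) := by
    rw [Real.cos_add, Real.cos_arccos ha1.1 ha1.2, Real.cos_arccos hb1.1 hb1.2,
      Real.sin_arccos, Real.sin_arccos]
  calc Real.arccos c ≤ Real.arccos (Real.cos (Real.arccos a + Real.arccos b)) := by
        have h2 : Real.cos (Real.arccos a + Real.arccos b) ≤ c := hcoscos ▸ hkey
        exact arccos_le_arccos' h2
    _ = Real.arccos a + Real.arccos b := Real.arccos_cos h0 hsum.le

/-- Triangle inequality for angles between nonzero vectors. -/
lemma angle_triangle_nz {x y z : V} (hx : x ≠ 0) (hy : y ≠ 0) (hz : z ≠ 0) :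
    angle x z ≤ angle x y + angle y z := by
  have nx : (0:ℝ) < ‖x‖⁻¹ := inv_pos.2 (norm_pos_iff.2 hx)
  have ny : (0:ℝ) < ‖y‖⁻¹ := inv_pos.2 (norm_pos_iff.2 hy)
  have nz : (0:ℝ) < ‖z‖⁻¹ := inv_pos.2 (norm_pos_iff.2 hz)
  have ux : ‖‖x‖⁻¹ • x‖ = 1 := by
    rw [norm_smul, Real.norm_eq_abs, abs_of_pos nx, inv_mul_cancel₀ (norm_ne_zero_iff.2 hx)]
  have uy : ‖‖y‖⁻¹ • y‖ = 1 := by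
    rw [norm_smul, Real.norm_eq_abs, abs_of_pos ny, inv_mul_cancel₀ (norm_ne_zero_iff.2 hy)]
  have uz : ‖‖z‖⁻¹ • z‖ = 1 := by
    rw [norm_smul, Real.norm_eq_abs, abs_of_pos nz, inv_mul_cancel₀ (norm_ne_zero_iff.2 hz)]
  have e1 : angle x z = angle (‖x‖⁻¹ • x) (‖z‖⁻¹ • z) := by
    rw [angle_smul_left_of_pos _ _ nx, angle_smul_right_of_pos _ _ nz]
  have e2 : angle x y = angle (‖x‖⁻¹ • x) (‖y‖⁻¹ • y) := by
    rw [angle_smul_left_of_pos _ _ nx, angle_smul_right_of_pos _ _ ny]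
  have e3 : angle y z = angle (‖y‖⁻¹ • y) (‖z‖⁻¹ • z) := by
    rw [angle_smul_left_of_pos _ _ ny, angle_smul_right_of_pos _ _ nz]
  rw [e1, e2, e3]
  exact angle_triangle_unit_s4 ux uy uz

/-- Chord-length bound: points at distance ≥ r from the origin subtending angle θ are at
distance at least (2/π)·r·θ from each other. -/
lemma chord_bound {x y : V} {r : ℝ} (hr : 0 < r) (hx : r ≤ ‖x‖) (hy : r ≤ ‖y‖) :
    2 / π * r * angle x y ≤ ‖x - y‖ := by
  set θ := angle x y with hθ
  have hθ0 : 0 ≤ θ := angle_nonneg x y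
  have hθπ : θ ≤ π := angle_le_pi x y
  have hcos : Real.cos θ * (‖x‖ * ‖y‖) = ⟪x, y⟫ := cos_angle_mul_norm_mul_norm x y
  have hc1 : -1 ≤ Real.cos θ := Real.neg_one_le_cos θ
  have hc2 : Real.cos θ ≤ 1 := Real.cos_le_one θ
  -- ‖x - y‖² ≥ 2 r² (1 - cos θ)
  have hsq : 2 * r ^ 2 * (1 - Real.cos θ) ≤ ‖x - y‖ ^ 2 := by
    rw [norm_sub_sq_real, ← hcos]
    nlinarith [sq_nonneg (‖x‖ - ‖y‖), mul_le_mul hx hy (le_of_lt hr) (le_trans hr.le hx)]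
  -- 1 - cos θ = 2 sin²(θ/2)
  have hhalf : 1 - Real.cos θ = 2 * Real.sin (θ / 2) ^ 2 := by
    have h1 : Real.cos (θ / 2) ^ 2 = 1 / 2 + Real.cos (2 * (θ / 2)) / 2 := Real.cos_sq (θ / 2)
    have h2 : Real.sin (θ / 2) ^ 2 + Real.cos (θ / 2) ^ 2 = 1 := Real.sin_sq_add_cos_sq (θ / 2)
    rw [show 2 * (θ / 2) = θ by ring] at h1
    linarith
  have hs0 : 0 ≤ Real.sin (θ / 2) := Real.sin_nonneg_of_nonneg_of_le_pi (by linarith)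
    (by linarith [Real.pi_pos])
  have hsin : 2 / π * (θ / 2) ≤ Real.sin (θ / 2) :=
    Real.mul_le_sin (by linarith) (by linarith)
  have hlhs0 : 0 ≤ 2 / π * r * θ := by
    have := Real.pi_pos; positivity
  have h2 : (2 * r * Real.sin (θ / 2)) ^ 2 ≤ ‖x - y‖ ^ 2 := by nlinarith
  have h3 : 2 * r * Real.sin (θ / 2) ≤ ‖x - y‖ := by
    nlinarith [norm_nonneg (x - y), mul_nonneg (mul_nonneg (by norm_num : (0:ℝ) ≤ 2) hr.le) hs0]
  calc 2 / π * r * θ = 2 * r * (2 / π * (θ / 2)) := by ring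
    _ ≤ 2 * r * Real.sin (θ / 2) := by nlinarith
    _ ≤ ‖x - y‖ := h3

section CompactHull

variable {W : Type*} [NormedAddCommGroup W] [NormedSpace ℝ W]

lemma isCompact_convexJoin {s t : Set W} (hs : IsCompact s) (ht : IsCompact t) :
    IsCompact (convexJoin ℝ s t) := by
  have himg : convexJoin ℝ s t =
      (fun p : ℝ × W × W => (1 - p.1) • p.2.1 + p.1 • p.2.2) '' (Icc 0 1 ×ˢ s ×ˢ t) := by
    ext u
    simp only [mem_convexJoin, Set.mem_image, Set.mem_prod, Prod.exists]
    constructor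
    · rintro ⟨a, ha, b, hb, hu⟩
      rw [segment_eq_image ℝ a b] at hu
      obtain ⟨θ, hθ, hθu⟩ := hu
      exact ⟨θ, a, b, ⟨hθ, ha, hb⟩, hθu⟩
    · rintro ⟨θ, a, b, ⟨hθ, ha, hb⟩, hu⟩
      refine ⟨a, ha, b, hb, ?_⟩
      rw [segment_eq_image ℝ a b]
      exact ⟨θ, hθ, hu⟩
  rw [himg]
  apply IsCompact.image (isCompact_Icc.prod (hs.prod ht))
  fun_prop

lemma hull_subset_join {Γ : Set W} (J : ℕ → Set W) (hJ0 : J 0 = Γ)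
    (hJs : ∀ n, J (n + 1) = convexJoin ℝ Γ (J n)) (hΓJ : ∀ n, Γ ⊆ J n) :
    ∀ (n : ℕ) (t : Finset W), t.card ≤ n + 1 → ↑t ⊆ Γ → convexHull ℝ (t : Set W) ⊆ J n := by
  intro n
  induction n with
  | zero =>
    intro t hcard hsub
    rcases t.eq_empty_or_nonempty with rfl | hne
    · simp
    · obtain ⟨a, rfl⟩ := Finset.card_eq_one.1 (le_antisymm hcard (Finset.card_pos.2 hne))
      rw [hJ0]
      simpa using hsub
  | succ n ih =>
    intro t hcard hsub
    classical
    rcases t.eq_empty_or_nonempty with rfl | hne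
    · simp
    obtain ⟨a, ha⟩ := hne
    have haΓ : a ∈ Γ := hsub ha
    rcases (t.erase a).eq_empty_or_nonempty with he | hne'
    · have : t = {a} := by
        apply Finset.eq_singleton_iff_unique_mem.2
        exact ⟨ha, fun b hb => by
          by_contra hba
          exact absurd (Finset.mem_erase.2 ⟨hba, hb⟩) (by simp [he])⟩
      rw [this]
      simp only [Finset.coe_singleton, convexHull_singleton, Set.singleton_subset_iff]
      exact hΓJ (n + 1) haΓ
    · have ht : (t : Set W) = insert a ↑(t.erase a) := by
        rw [Finset.coe_erase, Set.insert_diff_singleton, Set.insert_eq_of_mem (Finset.mem_coe.2 ha)]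
      rw [ht, convexHull_insert (by exact_mod_cast hne'), hJs n]
      apply convexJoin_mono (Set.singleton_subset_iff.2 haΓ)
      refine ih (t.erase a) ?_ (Set.Subset.trans (Finset.coe_subset.2 (Finset.erase_subset a t)) hsub)
      rw [Finset.card_erase_of_mem ha]
      omega

end CompactHull

abbrev E2 := EuclideanSpace ℝ (Fin 2)

lemma isCompact_hull2 {Γ : Set E2} (hΓ : IsCompact Γ) : IsCompact (convexHull ℝ Γ) := by
  rcases Γ.eq_empty_or_nonempty with rfl | hne
  · simp
  classical
  set J : ℕ → Set E2 := fun n => Nat.rec Γ (fun _ Jn => convexJoin ℝ Γ Jn) n with hJdef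
  have hJ0 : J 0 = Γ := rfl
  have hJs : ∀ n, J (n + 1) = convexJoin ℝ Γ (J n) := fun n => rfl
  have hΓJ : ∀ n, Γ ⊆ J n := by
    intro n
    induction n with
    | zero => exact subset_rfl
    | succ n ih =>
      rw [hJs]
      exact fun x hx => subset_convexJoin_left (hne.mono ih) hx
  have hJcompact : ∀ n, IsCompact (J n) := by
    intro n
    induction n with
    | zero => exact hΓ
    | succ n ih => rw [hJs]; exact isCompact_convexJoin hΓ ih
  have hJsub : ∀ n, J n ⊆ convexHull ℝ Γ := by
    intro n
    induction n with
    | zero => exact subset_convexHull ℝ Γ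
    | succ n ih =>
      rw [hJs]
      exact convexJoin_subset (subset_convexHull ℝ Γ) ih (convex_convexHull ℝ Γ)
  have hhull : convexHull ℝ Γ = J 2 := by
    apply Set.Subset.antisymm _ (hJsub 2)
    intro x hx
    rw [convexHull_eq_union] at hx
    simp only [Set.mem_iUnion] at hx
    obtain ⟨t, ht, hai, hxt⟩ := hx
    have hcard : t.card ≤ 3 := by
      have h1 := hai.card_le_finrank_succ
      rw [Fintype.card_coe] at h1
      refine h1.trans ?_
      have h2 : Module.finrank ℝ (vectorSpan ℝ (Set.range ((↑) : t → E2))) ≤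
          Module.finrank ℝ E2 := Submodule.finrank_le _
      rw [finrank_euclideanSpace_fin] at h2
      omega
    exact hull_subset_join J hJ0 hJs hΓJ 2 t hcard ht hxt
  rw [hhull]
  exact hJcompact 2

/-- Every frontier point of the hull of a compact set (whose hull has `0` as interior point)
lies on a segment with endpoints in the set, the whole segment being on the frontier. -/
lemma frontier_facet {Γ : Set E2} (hΓc : IsCompact Γ) {r : ℝ} (hr : 0 < r)
    (hΓh : closedBall 0 r ⊆ convexHull ℝ Γ) {w : E2}
    (hw : w ∈ frontier (convexHull ℝ Γ)) :
    ∃ p q, p ∈ Γ ∧ q ∈ Γ ∧ w ∈ segment ℝ p q ∧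
      segment ℝ p q ⊆ frontier (convexHull ℝ Γ) := by
  classical
  set K := convexHull ℝ Γ with hK
  have hKcv : Convex ℝ K := convex_convexHull ℝ Γ
  have hKcl : IsClosed K := (isCompact_hull2 hΓc).isClosed
  have hfr : frontier K = K \ interior K := hKcl.frontier_eq
  rw [hfr] at hw
  obtain ⟨hwK, hwi⟩ := hw
  have hball : ball (0 : E2) r ⊆ interior K :=
    interior_maximal (Set.Subset.trans ball_subset_closedBall hΓh) isOpen_ball
  have h0 : (0 : E2) ∈ interior K := hball (mem_ball_self hr)
  obtain ⟨f, hf⟩ := geometric_hahn_banach_open_point hKcv.interior isOpen_interior hwi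
  have hfw0 : 0 < f w := by simpa using hf 0 h0
  -- all of K is below the level f w
  have hAll : ∀ x ∈ K, f x ≤ f w := by
    intro x hxK
    by_contra h
    push_neg at h
    have hfx0 : 0 < f x := lt_trans hfw0 h
    set b : ℝ := (f w / f x + 1) / 2 with hb
    have hb0 : 0 < b := by positivity
    have hratio : f w / f x < 1 := (div_lt_one hfx0).2 h
    have hb1 : b < 1 := by rw [hb]; linarith
    have hbgt : f w < b * f x := by
      rw [hb]
      rw [div_lt_iff₀ hfx0] at hratio
      have : f w / f x * f x = f w := div_mul_cancel₀ _ (ne_of_gt hfx0)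
      nlinarith [hfx0]
    have hmem : b • x ∈ interior K := by
      have := hKcv.combo_interior_closure_mem_interior h0 (subset_closure hxK)
        (by linarith : (0:ℝ) < 1 - b) hb0.le (by ring)
      simpa using this
    have := hf _ hmem
    rw [map_smul, smul_eq_mul] at this
    linarith
  -- the kernel of f is spanned by a single nonzero vector
  have hrank : Module.finrank ℝ (LinearMap.ker (f : E2 →ₗ[ℝ] ℝ)) = 1 := by
    have hrn := LinearMap.finrank_range_add_finrank_ker (f : E2 →ₗ[ℝ] ℝ)
    have hsurj : LinearMap.range (f : E2 →ₗ[ℝ] ℝ) = ⊤ := by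
      rw [LinearMap.range_eq_top]
      intro c
      exact ⟨(c / f w) • w, by simp [div_mul_cancel₀ _ (ne_of_gt hfw0)]⟩
    rw [hsurj, finrank_top, Module.finrank_self] at hrn
    rw [finrank_euclideanSpace_fin] at hrn
    omega
  obtain ⟨v, hv0, hvspan⟩ := finrank_eq_one_iff'.mp hrank
  have hv0' : (v : E2) ≠ 0 := fun h => hv0 (Subtype.ext h)
  -- Caratheodory with positive weights
  obtain ⟨ι, hfin, z, lam, hzΓ, hai, hpos, hsum1, hsumz⟩ := eq_pos_convex_span_of_mem_convexHull hwK
  have hι : Nonempty ι := by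
    rcases isEmpty_or_nonempty ι with h | h
    · exfalso; rw [Finset.univ_eq_empty, Finset.sum_empty] at hsum1; norm_num at hsum1
    · exact h
  -- all points of the combination are on the level line f = f w
  have hlev : ∀ i, f (z i) = f w := by
    have hfsum : ∑ i, lam i * f (z i) = f w := by
      have : f (∑ i, lam i • z i) = f w := by rw [hsumz]
      rw [map_sum] at this
      simpa [map_smul, smul_eq_mul] using this
    intro i
    by_contra h
    have hle : ∀ j, f (z j) ≤ f w := fun j =>
      hAll (z j) (subset_convexHull ℝ Γ (hzΓ ⟨j, rfl⟩))
    have hlt : f (z i) < f w := lt_of_le_of_ne (hle i) h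
    have : ∑ j, lam j * f (z j) < ∑ j, lam j * f w := by
      apply Finset.sum_lt_sum (fun j _ => mul_le_mul_of_nonneg_left (hle j) (hpos j).le)
      exact ⟨i, Finset.mem_univ i, (mul_lt_mul_iff_right₀ (hpos i)).2 hlt⟩
    rw [hfsum, ← Finset.sum_mul, hsum1, one_mul] at this
    exact lt_irrefl _ this
  -- parametrize the points by the kernel direction
  have hker : ∀ i, z i - w ∈ LinearMap.ker (f : E2 →ₗ[ℝ] ℝ) := by
    intro i
    rw [LinearMap.mem_ker]
    simp [map_sub, hlev i]
  have hts : ∀ i, ∃ t : ℝ, z i = w + t • (v : E2) := by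
    intro i
    obtain ⟨c, hc⟩ := hvspan ⟨z i - w, hker i⟩
    refine ⟨c, ?_⟩
    have h5 := congrArg (Subtype.val) hc
    simp only [Submodule.coe_smul] at h5
    rw [h5]
    abel
  choose t ht using hts
  -- the weighted sum of the parameters vanishes
  have htsum : ∑ i, lam i * t i = 0 := by
    have h1 : (∑ i, lam i * t i) • (v : E2) = 0 := by
      have h2 : ∑ i, lam i • z i = ∑ i, (lam i • w + (lam i * t i) • (v : E2)) := by
        apply Finset.sum_congr rfl
        intro i _
        rw [ht i, smul_add, mul_smul]
      rw [h2, Finset.sum_add_distrib, ← Finset.sum_smul, ← Finset.sum_smul, hsum1, one_smul]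
        at hsumz
      have := congrArg (fun u => u - w) hsumz
      simpa using this
    exact (smul_eq_zero.mp h1).resolve_right hv0'
  -- pick indices with nonpositive and nonnegative parameters
  obtain ⟨i, _, hi⟩ := Finset.exists_min_image Finset.univ t Finset.univ_nonempty
  obtain ⟨j, _, hj⟩ := Finset.exists_max_image Finset.univ t Finset.univ_nonempty
  have hti : t i ≤ 0 := by
    by_contra h
    push_neg at h
    have : 0 < ∑ k, lam k * t k :=
      Finset.sum_pos (fun k _ => mul_pos (hpos k) (lt_of_lt_of_le h (hi k (Finset.mem_univ k))))
        Finset.univ_nonempty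
    rw [htsum] at this; exact lt_irrefl _ this
  have htj : 0 ≤ t j := by
    by_contra h
    push_neg at h
    have : ∑ k, lam k * t k < 0 := by
      have : ∀ k ∈ Finset.univ, lam k * t k < 0 :=
        fun k _ => mul_neg_of_pos_of_neg (hpos k) (lt_of_le_of_lt (hj k (Finset.mem_univ k)) h)
      exact Finset.sum_neg this Finset.univ_nonempty
    rw [htsum] at this; exact lt_irrefl _ this
  refine ⟨z i, z j, hzΓ ⟨i, rfl⟩, hzΓ ⟨j, rfl⟩, ?_, ?_⟩
  · -- w lies on the segment [z i, z j]
    rcases eq_or_lt_of_le (sub_nonneg.2 (hti.trans htj)) with hs | hs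
    · -- t j - t i = 0, so t i = t j = 0 and w = z i
      have hij : t j = t i := by linarith
      have hti0 : t i = 0 := le_antisymm hti (by linarith)
      have : z i = w := by rw [ht i, hti0, zero_smul, add_zero]
      rw [this]
      exact left_mem_segment ℝ w (z j)
    · set s : ℝ := t j - t i with hsdef
      have hsne : s ≠ 0 := ne_of_gt hs
      have hab : t j / s + -(t i) / s = 1 := by
        field_simp
        linarith [hsdef]
      have e2 : t j / s * t i + -(t i) / s * t j = 0 := by
        field_simp
        ring
      refine ⟨t j / s, -(t i) / s, div_nonneg htj hs.le,
        div_nonneg (neg_nonneg.2 hti) hs.le, hab, ?_⟩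
      rw [ht i, ht j]
      calc (t j / s) • (w + t i • (v:E2)) + (-(t i) / s) • (w + t j • (v:E2))
          = (t j / s + -(t i) / s) • w
            + (t j / s * t i + -(t i) / s * t j) • (v:E2) := by
            simp only [smul_add, add_smul, smul_smul]
            abel
        _ = w := by rw [hab, e2, one_smul, zero_smul, add_zero]
  · -- the segment lies on the frontier
    intro x hx
    rw [hfr]
    constructor
    · exact hKcv.segment_subset (subset_convexHull ℝ Γ (hzΓ ⟨i, rfl⟩))
        (subset_convexHull ℝ Γ (hzΓ ⟨j, rfl⟩)) hx
    · intro hxint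
      obtain ⟨a, b, ha, hb, hab, hxe⟩ := hx
      have : f x = f w := by
        rw [← hxe]
        simp only [map_add, map_smul, smul_eq_mul, hlev i, hlev j]
        rw [← add_mul, hab, one_mul]
      have := hf x hxint
      rw [‹f x = f w›] at this
      exact lt_irrefl _ this

lemma seg_norm_le {p q u : E2} (hu : u ∈ segment ℝ p q) :
    ‖u - p‖ ≤ ‖p - q‖ ∧ ‖u - q‖ ≤ ‖p - q‖ := by
  obtain ⟨a, b, ha, hb, hab, rfl⟩ := hu
  have ha1 : a = 1 - b := by linarith
  have hb1 : b = 1 - a := by linarith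
  constructor
  · have h1 : a • p + b • q - p = b • (q - p) := by rw [ha1]; module
    rw [h1, norm_smul, Real.norm_eq_abs, abs_of_nonneg hb, norm_sub_rev q p]
    nlinarith [norm_nonneg (p - q)]
  · have h1 : a • p + b • q - q = a • (p - q) := by rw [hb1]; module
    rw [h1, norm_smul, Real.norm_eq_abs, abs_of_nonneg ha]
    nlinarith [norm_nonneg (p - q)]


/-- Key step: a frontier point of `convexHull Γ` far (in angle) from the modified sector
belongs to `convexHull Γ'`. -/
lemma step_lemma (r L ψ φ : ℝ) (hr : 0 < r) (hLφ : L < 2 / π * r * φ)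
    (d : E2) (hd : ‖d‖ = 1) (Γ Γ' : Set E2) (hΓc : IsCompact Γ)
    (hΓb : Γ ∩ closedBall 0 r = ∅) (hΓh : closedBall 0 r ⊆ convexHull ℝ Γ)
    (hagree : Γ \ coneW d ψ = Γ' \ coneW d ψ)
    (hfacet : ∀ p q : E2, segment ℝ p q ⊆ frontier (convexHull ℝ Γ) → ‖p - q‖ ≤ L)
    (u : E2) (hu : u ≠ 0) (hud : ψ + φ ≤ angle u d)
    (hufr : u ∈ frontier (convexHull ℝ Γ)) : u ∈ convexHull ℝ Γ' := by
  have hd0 : d ≠ 0 := by intro h; rw [h, norm_zero] at hd; norm_num at hd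
  obtain ⟨p, q, hpΓ, hqΓ, huseg, hseg⟩ := frontier_facet hΓc hr hΓh hufr
  have hpq : ‖p - q‖ ≤ L := hfacet p q hseg
  have hKint : ball (0 : E2) r ⊆ interior (convexHull ℝ Γ) :=
    interior_maximal (Set.Subset.trans ball_subset_closedBall hΓh) isOpen_ball
  have hun : r ≤ ‖u‖ := by
    by_contra h
    push_neg at h
    exact hufr.2 (hKint (by simpa [mem_ball, dist_eq_norm] using h))
  -- endpoints are outside the closed ball
  have houtside : ∀ x ∈ Γ, r ≤ ‖x‖ ∧ x ≠ 0 := by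
    intro x hx
    have hxb : x ∉ closedBall (0 : E2) r := by
      intro hb
      rw [Set.eq_empty_iff_forall_notMem] at hΓb
      exact hΓb x ⟨hx, hb⟩
    rw [mem_closedBall, dist_eq_norm, sub_zero, not_le] at hxb
    exact ⟨hxb.le, fun h => by rw [h, norm_zero] at hxb; linarith⟩
  obtain ⟨hpr, hp0⟩ := houtside p hpΓ
  obtain ⟨hqr, hq0⟩ := houtside q hqΓ
  have hu0' : u ≠ 0 := hu
  -- angular distance from u to the endpoints is < φ
  have hangle : ∀ x : E2, r ≤ ‖x‖ → ‖u - x‖ ≤ L → angle u x < φ := by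
    intro x hxr hxL
    have hc := chord_bound hr hun hxr
    have hpos : 0 < 2 / π * r := by
      have := Real.pi_pos; positivity
    nlinarith [hc.trans hxL]
  have hup : angle u p < φ := hangle p hpr ((seg_norm_le huseg).1.trans hpq)
  have huq : angle u q < φ := by
    apply hangle q hqr
    exact (seg_norm_le huseg).2.trans hpq
  -- hence the endpoints are outside the cone, so they belong to Γ'
  have hmem' : ∀ x : E2, x ∈ Γ → x ≠ 0 → angle u x < φ → x ∈ Γ' := by
    intro x hx hx0 hax
    have htri : angle u d ≤ angle u x + angle x d := angle_triangle_nz hu hx0 hd0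
    have hxd : ψ < angle x d := by linarith
    have : x ∈ Γ \ coneW d ψ := by
      refine ⟨hx, ?_⟩
      intro hcone
      rcases hcone with h0 | ⟨_, hle⟩
      · exact hx0 h0
      · linarith
    rw [hagree] at this
    exact this.1
  have hpΓ' : p ∈ Γ' := hmem' p hpΓ hp0 hup
  have hqΓ' : q ∈ Γ' := hmem' q hqΓ hq0 huq
  exact (convex_convexHull ℝ Γ').segment_subset (subset_convexHull ℝ Γ' hpΓ')
    (subset_convexHull ℝ Γ' hqΓ') huseg

/-- One direction of the main theorem. -/
lemma main_dir (r L ψ φ : ℝ) (hr : 0 < r) (hLφ : L < 2 / π * r * φ)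
    (d : E2) (hd : ‖d‖ = 1) (Γ Γ' : Set E2) (hΓc : IsCompact Γ) (hΓ'c : IsCompact Γ')
    (hΓb : Γ ∩ closedBall 0 r = ∅) (hΓ'b : Γ' ∩ closedBall 0 r = ∅)
    (hΓh : closedBall 0 r ⊆ convexHull ℝ Γ) (hΓ'h : closedBall 0 r ⊆ convexHull ℝ Γ')
    (hagree : Γ \ coneW d ψ = Γ' \ coneW d ψ)
    (hfacet : ∀ p q : E2, segment ℝ p q ⊆ frontier (convexHull ℝ Γ) → ‖p - q‖ ≤ L)
    (hfacet' : ∀ p q : E2, segment ℝ p q ⊆ frontier (convexHull ℝ Γ') → ‖p - q‖ ≤ L)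
    (w : E2) (hw : w ≠ 0) (hwd : ψ + φ ≤ angle w d)
    (hwfr : w ∈ frontier (convexHull ℝ Γ)) : w ∈ frontier (convexHull ℝ Γ') := by
  set K' := convexHull ℝ Γ' with hK'
  have hK'cl : IsClosed K' := (isCompact_hull2 hΓ'c).isClosed
  have hwK' : w ∈ K' :=
    step_lemma r L ψ φ hr hLφ d hd Γ Γ' hΓc hΓb hΓh hagree hfacet w hw hwd hwfr
  rw [hK'cl.frontier_eq]
  refine ⟨hwK', ?_⟩
  intro hwint
  -- find the frontier point on the ray through w beyond w
  have hbdd : ∃ R : ℝ, K' ⊆ closedBall 0 R := by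
    obtain ⟨R, hR⟩ := (isCompact_hull2 hΓ'c).isBounded.subset_closedBall 0
    exact ⟨R, hR⟩
  obtain ⟨R, hR⟩ := hbdd
  set T : Set ℝ := {s : ℝ | 1 ≤ s ∧ s • w ∈ K'} with hT
  have hTne : T.Nonempty := ⟨1, le_refl 1, by simpa using hwK'⟩
  have hwn : 0 < ‖w‖ := norm_pos_iff.2 hw
  have hTbdd : BddAbove T := by
    refine ⟨R / ‖w‖, ?_⟩
    rintro s ⟨hs1, hsK⟩
    have := hR hsK
    rw [mem_closedBall, dist_eq_norm, sub_zero, norm_smul, Real.norm_eq_abs,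
      abs_of_pos (lt_of_lt_of_le zero_lt_one hs1)] at this
    rw [le_div_iff₀ hwn]
    exact this
  have hTcl : IsClosed T := by
    have : T = Ici (1:ℝ) ∩ (fun s : ℝ => s • w) ⁻¹' K' := by
      ext s; simp [hT, Set.mem_setOf_eq, mem_Ici]
    rw [this]
    exact isClosed_Ici.inter (hK'cl.preimage (by fun_prop))
  set t₀ := sSup T with ht₀
  have ht₀T : t₀ ∈ T := hTcl.csSup_mem hTne hTbdd
  obtain ⟨ht₀1, ht₀K⟩ := ht₀T
  have ht₀pos : 0 < t₀ := lt_of_lt_of_le zero_lt_one ht₀1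
  set w' : E2 := t₀ • w with hw'
  have hw'0 : w' ≠ 0 := smul_ne_zero (ne_of_gt ht₀pos) hw
  have hw'd : ψ + φ ≤ angle w' d := by
    rw [hw', angle_smul_left_of_pos _ _ ht₀pos]
    exact hwd
  -- w' is not interior to K'
  have hw'ni : w' ∉ interior K' := by
    intro hint
    obtain ⟨ε, hε, hball⟩ := Metric.isOpen_iff.1 isOpen_interior w' hint
    set δ := ε / (2 * ‖w‖) with hδ
    have hδpos : 0 < δ := by positivity
    have hmem : (t₀ + δ) • w ∈ K' := by
      apply interior_subset
      apply hball
      rw [mem_ball, dist_eq_norm, hw', ← sub_smul, add_sub_cancel_left, norm_smul,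
        Real.norm_eq_abs, abs_of_pos hδpos, hδ]
      rw [div_mul_eq_mul_div, mul_comm, div_lt_iff₀ (by positivity : (0:ℝ) < 2 * ‖w‖)]
      nlinarith
    have : t₀ + δ ∈ T := ⟨by linarith, hmem⟩
    have := le_csSup hTbdd this
    linarith
  -- so w' is on the frontier of K', hence in the hull of Γ
  have hw'fr : w' ∈ frontier K' := by
    rw [hK'cl.frontier_eq]
    exact ⟨ht₀K, hw'ni⟩
  have hw'K : w' ∈ convexHull ℝ Γ :=
    step_lemma r L ψ φ hr hLφ d hd Γ' Γ hΓ'c hΓ'b hΓ'h hagree.symm hfacet' w' hw'0 hw'd hw'fr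
  -- t₀ must exceed 1, since w ∈ interior K' but w' ∉ interior K'
  have ht₀ne : t₀ ≠ 1 := by
    intro h
    rw [h, one_smul] at hw'
    exact hw'ni (hw' ▸ hwint)
  have ht₀gt : 1 < t₀ := lt_of_le_of_ne ht₀1 (Ne.symm ht₀ne)
  -- then w is interior to the hull of Γ, contradicting w ∈ frontier
  have h0K : (0 : E2) ∈ interior (convexHull ℝ Γ) :=
    interior_maximal (Set.Subset.trans ball_subset_closedBall hΓh) isOpen_ball
      (mem_ball_self hr)
  have hcombo : (1 - 1 / t₀) • (0 : E2) + (1 / t₀) • w' ∈ interior (convexHull ℝ Γ) :=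
    (convex_convexHull ℝ Γ).combo_interior_closure_mem_interior h0K (subset_closure hw'K)
      (by rw [sub_pos, div_lt_one ht₀pos]; exact ht₀gt)
      (by positivity) (by ring)
  have hwit : (1 - 1 / t₀) • (0 : E2) + (1 / t₀) • w' = w := by
    rw [smul_zero, zero_add, hw', smul_smul, one_div, inv_mul_cancel₀ (ne_of_gt ht₀pos),
      one_smul]
  rw [hwit] at hcombo
  exact hwfr.2 hcombo

/-- If two compact sets encircling the ball of radius `r` agree outside the angular sector
`A` of half-aperture `ψ` about `d`, and all facets (maximal line segments in the boundary of
the convex hull) of both sets have length at most `L < (2/π)·r·φ`, then the boundaries of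
their convex hulls agree at every point whose angular distance from `d` is at least `ψ + φ`. -/
theorem stmt4 (r L ψ φ : ℝ) (hr : 0 < r) (hL : 0 < L) (hψ : 0 < ψ) (hφ : 0 < φ)
    (hψφ : ψ + φ ≤ π) (hLφ : L < (2 / π) * r * φ)
    (d : EuclideanSpace ℝ (Fin 2)) (hd : ‖d‖ = 1)
    (Γ Γ' : Set (EuclideanSpace ℝ (Fin 2))) (hΓc : IsCompact Γ) (hΓ'c : IsCompact Γ')
    (hΓb : Γ ∩ closedBall 0 r = ∅) (hΓ'b : Γ' ∩ closedBall 0 r = ∅)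
    (hΓh : closedBall 0 r ⊆ convexHull ℝ Γ) (hΓ'h : closedBall 0 r ⊆ convexHull ℝ Γ')
    (hagree : Γ \ coneW d ψ = Γ' \ coneW d ψ)
    (hfacet : ∀ p q : EuclideanSpace ℝ (Fin 2),
      segment ℝ p q ⊆ frontier (convexHull ℝ Γ) → ‖p - q‖ ≤ L)
    (hfacet' : ∀ p q : EuclideanSpace ℝ (Fin 2),
      segment ℝ p q ⊆ frontier (convexHull ℝ Γ') → ‖p - q‖ ≤ L)
    (w : EuclideanSpace ℝ (Fin 2)) (hw : w ≠ 0) (hwd : ψ + φ ≤ angle w d) :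
    w ∈ frontier (convexHull ℝ Γ) ↔ w ∈ frontier (convexHull ℝ Γ') := by
  constructor
  · exact main_dir r L ψ φ hr hLφ d hd Γ Γ' hΓc hΓ'c hΓb hΓ'b hΓh hΓ'h hagree
      hfacet hfacet' w hw hwd
  · exact main_dir r L ψ φ hr hLφ d hd Γ' Γ hΓ'c hΓc hΓ'b hΓb hΓ'h hΓh hagree.symm
      hfacet' hfacet w hw hwd
end

section
/- Let Γ ⊆ ℝ² be a compact set and let C be a bounded connected component of ℝ² \ Γ. Then C ⊆ interior(convexHull ℝ Γ). -/
/-- Any bounded connected component of the complement of a compact planar set `Γ`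
is contained in the interior of the convex hull of `Γ`. -/
theorem stmt5 (Γ : Set (EuclideanSpace ℝ (Fin 2))) (hΓ : IsCompact Γ)
    (C : Set (EuclideanSpace ℝ (Fin 2)))
    (hC : ∃ x ∈ Γᶜ, C = connectedComponentIn Γᶜ x)
    (hCb : Bornology.IsBounded C) :
    C ⊆ interior (convexHull ℝ Γ) := by
  obtain ⟨x₀, hx₀, rfl⟩ := hC
  set K : Set (EuclideanSpace ℝ (Fin 2)) := convexHull ℝ Γ with hKdef
  -- Γ is nonempty, otherwise the component is the whole (unbounded) plane
  rcases Γ.eq_empty_or_nonempty with hΓe | ⟨a, ha⟩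
  · exfalso
    rw [hΓe] at hCb
    simp only [Set.compl_empty, connectedComponentIn_univ] at hCb
    rw [PreconnectedSpace.connectedComponent_eq_univ] at hCb
    obtain ⟨r, hr⟩ := isBounded_iff_forall_norm_le.mp hCb
    obtain ⟨z, hz⟩ := exists_norm_eq (EuclideanSpace ℝ (Fin 2)) (le_max_right (r + 1) 0)
    have := hr z (Set.mem_univ z)
    have h1 : r + 1 ≤ max (r + 1) 0 := le_max_left _ _
    nlinarith [hz ▸ this]
  intro x hxC
  by_contra hx
  -- the component based at x equals C
  have hCeq : connectedComponentIn Γᶜ x₀ = connectedComponentIn Γᶜ x :=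
    connectedComponentIn_eq hxC
  have hxΓ : x ∈ Γᶜ := connectedComponentIn_subset Γᶜ x₀ hxC
  -- a ball around x inside Γᶜ
  obtain ⟨ε, hε, hball⟩ := Metric.isOpen_iff.mp hΓ.isClosed.isOpen_compl x hxΓ
  have hKconv : Convex ℝ K := convex_convexHull ℝ Γ
  -- a point in the ball outside the closure of K
  obtain ⟨y, hyball, hyK⟩ : ∃ y ∈ Metric.ball x ε, y ∉ closure K := by
    by_contra h
    push_neg at h
    have hxicl : x ∈ interior (closure K) :=
      mem_interior_iff_mem_nhds.mpr (Filter.mem_of_superset (Metric.ball_mem_nhds x hε) h)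
    rcases (interior K).eq_empty_or_nonempty with hKi | ⟨z, hz⟩
    · -- empty interior: K lies in a proper affine subspace, whose closure has empty interior
      have hspan : affineSpan ℝ Γ ≠ ⊤ := by
        intro htop
        rw [← interior_convexHull_nonempty_iff_affineSpan_eq_top] at htop
        rw [hKi] at htop
        exact Set.not_nonempty_empty htop
      have hsub : closure K ⊆ (affineSpan ℝ Γ : Set (EuclideanSpace ℝ (Fin 2))) := by
        have h1 : K ⊆ (affineSpan ℝ Γ : Set (EuclideanSpace ℝ (Fin 2))) :=
          convexHull_subset_affineSpan Γ
        have h2 : IsClosed (affineSpan ℝ Γ : Set (EuclideanSpace ℝ (Fin 2))) :=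
          (affineSpan ℝ Γ).closed_of_finiteDimensional
        calc closure K ⊆ closure (affineSpan ℝ Γ : Set (EuclideanSpace ℝ (Fin 2))) :=
              closure_mono h1
          _ = _ := h2.closure_eq
      have hxint : x ∈ interior (affineSpan ℝ Γ : Set (EuclideanSpace ℝ (Fin 2))) :=
        interior_mono hsub hxicl
      have htop : affineSpan ℝ
          (interior (affineSpan ℝ Γ : Set (EuclideanSpace ℝ (Fin 2)))) = ⊤ :=
        isOpen_interior.affineSpan_eq_top ⟨x, hxint⟩
      apply hspan
      have hle : affineSpan ℝ
          (interior (affineSpan ℝ Γ : Set (EuclideanSpace ℝ (Fin 2)))) ≤ affineSpan ℝ Γ :=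
        affineSpan_le.mpr interior_subset
      rw [htop] at hle
      exact top_le_iff.mp hle
    · -- nonempty interior: x is in interior (closure K), push it into interior K
      apply hx
      obtain ⟨δ, hδ, hδball⟩ := Metric.isOpen_iff.mp isOpen_interior x hxicl
      set c : ℝ := δ / (2 * (‖x - z‖ + 1)) with hc
      have hxz1 : (0:ℝ) < ‖x - z‖ + 1 := by positivity
      have hcpos : 0 < c := by positivity
      set w : EuclideanSpace ℝ (Fin 2) := x + c • (x - z) with hw
      have hwball : w ∈ Metric.ball x δ := by
        rw [Metric.mem_ball, dist_eq_norm, hw]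
        have : x + c • (x - z) - x = c • (x - z) := by abel
        rw [this, norm_smul, Real.norm_eq_abs, abs_of_pos hcpos, hc]
        rw [div_mul_eq_mul_div, div_lt_iff₀ (by positivity)]
        nlinarith [norm_nonneg (x - z)]
      have hwcl : w ∈ closure K := interior_subset (hδball hwball)
      have h1c : (0:ℝ) < 1 + c := by linarith
      have hcomb : ((1 + c)⁻¹) • w + (c / (1 + c)) • z ∈ interior K :=
        hKconv.combo_closure_interior_mem_interior hwcl hz (by positivity)
          (by positivity) (by field_simp)
      have heq : ((1 + c)⁻¹) • w + (c / (1 + c)) • z = x := by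
        rw [hw]
        match_scalars <;> field_simp <;> ring
      rwa [heq] at hcomb
  -- separate y from closure K
  obtain ⟨f, u, hfK, hfy⟩ :=
    geometric_hahn_banach_closed_point hKconv.closure isClosed_closure hyK
  -- the open half space
  set H : Set (EuclideanSpace ℝ (Fin 2)) := {z | u < f z} with hHdef
  have hHconv : Convex ℝ H := convex_halfSpace_gt f.toLinearMap.isLinear u
  have hΓK : Γ ⊆ closure K := (subset_convexHull ℝ Γ).trans subset_closure
  have hHΓ : H ⊆ Γᶜ := by
    intro z hz hzΓ
    exact absurd (hfK z (hΓK hzΓ)) (not_lt.mpr hz.le)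
  have hyH : y ∈ H := hfy
  -- the connected set ball ∪ H
  have hScon : IsPreconnected (Metric.ball x ε ∪ H) :=
    IsPreconnected.union y hyball hyH (convex_ball x ε).isPreconnected
      hHconv.isPreconnected
  have hSsub : Metric.ball x ε ∪ H ⊆ Γᶜ := Set.union_subset hball hHΓ
  have hSC : Metric.ball x ε ∪ H ⊆ connectedComponentIn Γᶜ x₀ := by
    rw [hCeq]
    exact hScon.subset_connectedComponentIn
      (Set.mem_union_left _ (Metric.mem_ball_self hε)) hSsub
  -- H is unbounded, contradicting boundedness of the component
  obtain ⟨r, hr⟩ := isBounded_iff_forall_norm_le.mp hCb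
  have hfa : f a < u := hfK a (hΓK ha)
  have hfyane : f y - f a ≠ 0 := by
    have := hfy
    intro h
    simp only [sub_eq_zero] at h
    linarith
  set v : EuclideanSpace ℝ (Fin 2) := (f y - f a)⁻¹ • (y - a) with hv
  have hfv : f v = 1 := by
    rw [hv, map_smul, map_sub, smul_eq_mul]
    field_simp
  have hvne : v ≠ 0 := by
    intro h
    rw [h, map_zero] at hfv
    norm_num at hfv
  have hvpos : 0 < ‖v‖ := norm_pos_iff.mpr hvne
  set t : ℝ := (r + ‖y‖ + 1) / ‖v‖ with ht
  have hrpos : 0 ≤ r := le_trans (norm_nonneg x) (hr x hxC)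
  have htpos : 0 < t := by positivity
  have hzH : y + t • v ∈ H := by
    simp only [hHdef, Set.mem_setOf_eq, map_add, map_smul, hfv, smul_eq_mul, mul_one]
    linarith
  have hzC : y + t • v ∈ connectedComponentIn Γᶜ x₀ := hSC (Set.mem_union_right _ hzH)
  have hnorm : r + 1 ≤ ‖y + t • v‖ := by
    have h1 : ‖t • v‖ ≤ ‖y + t • v‖ + ‖y‖ := by
      have := norm_sub_le (y + t • v) y
      simpa using this
    have h2 : ‖t • v‖ = t * ‖v‖ := by
      rw [norm_smul, Real.norm_eq_abs, abs_of_pos htpos]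
    have h3 : t * ‖v‖ = r + ‖y‖ + 1 := by
      rw [ht]
      field_simp
    linarith
  have := hr _ hzC
  linarith
end

section
/- Let r > 0 and let Γ ⊆ ℝ² be a compact set with Γ ∩ closedBall(0,r) = ∅ such that 0 lies in a bounded connected component of ℝ² \ Γ. Then closedBall(0,r) ⊆ convexHull ℝ Γ. Consequently, every line ℓ ⊆ ℝ² such that convexHull ℝ Γ is contained in one of the two closed half-planes bounded by ℓ satisfies infDist(0, ℓ) ≥ r. -/
open Metric RealInnerProductSpace

open Set Finset in
lemma isCompact_convexHull_of_isCompact {Γ : Set (EuclideanSpace ℝ (Fin 2))}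
    (hΓ : IsCompact Γ) : IsCompact (convexHull ℝ Γ) := by
  rcases Γ.eq_empty_or_nonempty with rfl | ⟨y₀, hy₀⟩
  · simpa using isCompact_empty
  · set f : (Fin 3 → ℝ) × (Fin 3 → EuclideanSpace ℝ (Fin 2)) → EuclideanSpace ℝ (Fin 2) :=
      fun p => ∑ i, p.1 i • p.2 i with hf
    have hfc : Continuous f := by
      apply continuous_finset_sum
      intro i _
      exact ((continuous_apply i).comp continuous_fst).smul
        ((continuous_apply i).comp continuous_snd)
    have hK : IsCompact ((stdSimplex ℝ (Fin 3)) ×ˢ (Set.univ.pi fun _ : Fin 3 => Γ)) :=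
      IsCompact.prod (isCompact_stdSimplex ℝ (Fin 3)) (isCompact_univ_pi fun _ => hΓ)
    have himg : convexHull ℝ Γ
        = f '' ((stdSimplex ℝ (Fin 3)) ×ˢ (Set.univ.pi fun _ : Fin 3 => Γ)) := by
      apply Set.Subset.antisymm
      · intro x hx
        obtain ⟨ι, hfin, z, w, hzΓ, hai, hwpos, hwsum, hxsum⟩ :=
          eq_pos_convex_span_of_mem_convexHull hx
        have hcard : Fintype.card ι ≤ 3 := by
          have h1 := hai.card_le_finrank_succ
          have h2 : Module.finrank ℝ (vectorSpan ℝ (Set.range z)) ≤ 2 := by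
            have h3 := Submodule.finrank_le (vectorSpan ℝ (Set.range z))
            rwa [finrank_euclideanSpace_fin] at h3
          omega
        obtain ⟨e⟩ : Nonempty (ι ↪ Fin 3) :=
          Function.Embedding.nonempty_of_card_le (by simpa using hcard)
        classical
        set w' : Fin 3 → ℝ := Function.extend e w (fun _ => 0) with hw'
        set z' : Fin 3 → EuclideanSpace ℝ (Fin 2) := Function.extend e z (fun _ => y₀) with hz'
        have hwe : ∀ i, w' (e i) = w i := fun i => e.injective.extend_apply w _ i
        have hze : ∀ i, z' (e i) = z i := fun i => e.injective.extend_apply z _ i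
        have hwoff : ∀ j : Fin 3, j ∉ Finset.univ.image e → w' j = 0 := by
          intro j hj
          apply Function.extend_apply'
          rintro ⟨i, rfl⟩
          exact hj (Finset.mem_image.2 ⟨i, Finset.mem_univ i, rfl⟩)
        have hsum_eq : ∀ (g : ℝ → EuclideanSpace ℝ (Fin 2) → EuclideanSpace ℝ (Fin 2)),
            (∀ y, g 0 y = 0) →
            ∑ j, g (w' j) (z' j) = ∑ i, g (w i) (z i) := by
          intro g hg0
          rw [← Finset.sum_subset (Finset.subset_univ (Finset.univ.image e))
            (fun j _ hj => by rw [hwoff j hj, hg0]),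
            Finset.sum_image (fun a _ b _ h => e.injective h)]
          exact Finset.sum_congr rfl fun i _ => by rw [hwe, hze]
        have hwsum' : ∑ j, w' j = 1 := by
          rw [← Finset.sum_subset (Finset.subset_univ (Finset.univ.image e))
            (fun j _ hj => hwoff j hj),
            Finset.sum_image (fun a _ b _ h => e.injective h)]
          rw [← hwsum]
          exact Finset.sum_congr rfl fun i _ => hwe i
        have hxsum' : ∑ j, w' j • z' j = x := by
          rw [hsum_eq (fun a y => a • y) (fun y => zero_smul ℝ y), hxsum]
        refine ⟨(w', z'), ⟨⟨?_, hwsum'⟩, ?_⟩, hxsum'⟩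
        · intro j
          show 0 ≤ w' j
          by_cases hj : j ∈ Finset.univ.image e
          · obtain ⟨i, _, rfl⟩ := Finset.mem_image.1 hj
            rw [hwe]; exact (hwpos i).le
          · rw [hwoff j hj]
        · intro j _
          show z' j ∈ Γ
          by_cases hj : j ∈ Finset.univ.image e
          · obtain ⟨i, _, rfl⟩ := Finset.mem_image.1 hj
            rw [hze]; exact hzΓ ⟨i, rfl⟩
          · have : z' j = y₀ := Function.extend_apply' _ _ _ (by
              rintro ⟨i, rfl⟩
              exact hj (Finset.mem_image.2 ⟨i, Finset.mem_univ i, rfl⟩))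
            rw [this]; exact hy₀
      · rintro x ⟨⟨w, z⟩, ⟨⟨hw0, hw1⟩, hz⟩, rfl⟩
        exact (convex_convexHull ℝ Γ).sum_mem (fun i _ => hw0 i) hw1
          (fun i _ => subset_convexHull ℝ Γ (hz i (Set.mem_univ i)))
    rw [himg]
    exact hK.image hfc

/-- If a compact planar set `Γ` avoids the closed ball of radius `r` about the origin and
encircles the origin (i.e. the origin lies in a bounded connected component of the
complement), then the closed ball is contained in the convex hull of `Γ`; consequently
every line bounding a closed half-plane containing the convex hull is at distance at
least `r` from the origin. -/
theorem stmt6 (r : ℝ) (hr : 0 < r) (Γ : Set (EuclideanSpace ℝ (Fin 2))) (hΓ : IsCompact Γ)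
    (hΓb : Γ ∩ closedBall 0 r = ∅)
    (h0 : Bornology.IsBounded (connectedComponentIn Γᶜ 0)) :
    closedBall (0 : EuclideanSpace ℝ (Fin 2)) r ⊆ convexHull ℝ Γ ∧
      ∀ (v : EuclideanSpace ℝ (Fin 2)) (a : ℝ), v ≠ 0 →
        convexHull ℝ Γ ⊆ {z | ⟪z, v⟫ ≤ a} →
        r ≤ infDist (0 : EuclideanSpace ℝ (Fin 2)) {z | ⟪z, v⟫ = a} := by
  have hball_sub : closedBall (0 : EuclideanSpace ℝ (Fin 2)) r ⊆ Γᶜ := by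
    intro y hy hyΓ
    have : y ∈ Γ ∩ closedBall 0 r := Set.mem_inter hyΓ hy
    rw [hΓb] at this
    exact this
  have hΓne : Γ.Nonempty := by
    rcases Γ.eq_empty_or_nonempty with rfl | h
    · rw [Set.compl_empty, connectedComponentIn_univ,
        PreconnectedSpace.connectedComponent_eq_univ] at h0
      exact absurd h0 (NormedSpace.unbounded_univ ℝ _)
    · exact h
  have hcomp : IsCompact (convexHull ℝ Γ) := isCompact_convexHull_of_isCompact hΓ
  have hsub : closedBall (0 : EuclideanSpace ℝ (Fin 2)) r ⊆ convexHull ℝ Γ := by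
    intro x hx
    by_contra hxh
    obtain ⟨f, u, hfx, hfb⟩ := geometric_hahn_banach_point_closed (convex_convexHull ℝ Γ)
      hcomp.isClosed hxh
    set H : Set (EuclideanSpace ℝ (Fin 2)) := {z | f z < u} with hH
    obtain ⟨b, hb⟩ := hΓne
    have hfb' : u < f b := hfb b (subset_convexHull ℝ Γ hb)
    -- a direction along which f increases
    have hfbx : 0 < f (b - x) := by
      have : f (b - x) = f b - f x := by rw [map_sub]
      rw [this]; linarith
    set wv : EuclideanSpace ℝ (Fin 2) := (f (b - x))⁻¹ • (b - x) with hwvdef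
    have hwv : f wv = 1 := by
      rw [hwvdef, map_smul, smul_eq_mul, inv_mul_cancel₀ hfbx.ne']
    have hwvne : wv ≠ 0 := by
      intro h
      rw [h, map_zero] at hwv
      exact one_ne_zero hwv.symm
    have hwpos : 0 < ‖wv‖ := norm_pos_iff.2 hwvne
    -- H avoids Γ
    have hHc : H ⊆ Γᶜ := fun z hz hzΓ =>
      absurd (hfb z (subset_convexHull ℝ Γ hzΓ)) (not_lt.2 (le_of_lt hz))
    -- the closed ball lies in the connected component of 0 in Γᶜ
    have hballcomp : closedBall (0 : EuclideanSpace ℝ (Fin 2)) r ⊆ connectedComponentIn Γᶜ 0 :=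
      (convex_closedBall _ _).isPreconnected.subset_connectedComponentIn
        (mem_closedBall_self hr.le) hball_sub
    have hxH : x ∈ H := hfx
    have hHconv : Convex ℝ H := convex_halfSpace_lt (f : EuclideanSpace ℝ (Fin 2) →ₗ[ℝ] ℝ).isLinear u
    have hHcomp : H ⊆ connectedComponentIn Γᶜ x :=
      hHconv.isPreconnected.subset_connectedComponentIn hxH hHc
    have hcompeq : connectedComponentIn Γᶜ x = connectedComponentIn Γᶜ 0 :=
      (connectedComponentIn_eq (hballcomp hx)).symm
    have hHb : Bornology.IsBounded H := h0.subset (hcompeq ▸ hHcomp)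
    obtain ⟨C, hC⟩ := isBounded_iff_forall_norm_le.1 hHb
    have hxC : ‖x‖ ≤ C := hC x hxH
    set t : ℝ := (C + ‖x‖ + 1) / ‖wv‖ with htdef
    have ht : 0 < t := div_pos (by linarith [norm_nonneg x]) hwpos
    set z : EuclideanSpace ℝ (Fin 2) := x - t • wv with hzdef
    have hzH : z ∈ H := by
      have : f z = f x - t := by
        rw [hzdef, map_sub, map_smul, smul_eq_mul, hwv, mul_one]
      simpa [hH, this] using by linarith
    have hznorm : C + 1 ≤ ‖z‖ := by
      have h1 : ‖t • wv‖ - ‖x‖ ≤ ‖t • wv - x‖ := norm_sub_norm_le _ _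
      have h2 : ‖t • wv - x‖ = ‖z‖ := by rw [hzdef, norm_sub_rev]
      have h3 : ‖t • wv‖ = C + ‖x‖ + 1 := by
        rw [norm_smul, Real.norm_of_nonneg ht.le, htdef, div_mul_cancel₀ _ hwpos.ne']
      linarith
    linarith [hC z hzH]
  refine ⟨hsub, fun v a hv hva => ?_⟩
  have hvpos : 0 < ‖v‖ := norm_pos_iff.2 hv
  have hra : r * ‖v‖ ≤ a := by
    have hmem : (r / ‖v‖) • v ∈ closedBall (0 : EuclideanSpace ℝ (Fin 2)) r := by
      rw [mem_closedBall, dist_zero_right, norm_smul, Real.norm_of_nonneg (div_pos hr hvpos).le,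
        div_mul_cancel₀ _ hvpos.ne']
    have hin := hva (hsub hmem)
    rw [Set.mem_setOf_eq, real_inner_smul_left, real_inner_self_eq_norm_mul_norm] at hin
    calc r * ‖v‖ = r / ‖v‖ * (‖v‖ * ‖v‖) := by field_simp
      _ ≤ a := hin
  have hane : Set.Nonempty {z : EuclideanSpace ℝ (Fin 2) | ⟪z, v⟫ = a} := by
    refine ⟨(a / ‖v‖ ^ 2) • v, ?_⟩
    rw [Set.mem_setOf_eq, real_inner_smul_left, real_inner_self_eq_norm_mul_norm]
    rw [sq]
    field_simp
  by_contra hlt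
  rw [not_le] at hlt
  obtain ⟨y, hy, hdy⟩ := (infDist_lt_iff hane).1 hlt
  rw [Set.mem_setOf_eq] at hy
  have hcs : ⟪y, v⟫ ≤ ‖y‖ * ‖v‖ := real_inner_le_norm y v
  rw [hy] at hcs
  rw [dist_comm, dist_zero_right] at hdy
  nlinarith
end

section
/- Let q ∈ (0, π/2), c ∈ (0, π), and let Γ ⊆ ℝ² be a set with 0 ∉ Γ. Suppose v ∈ Γ is a (q,c)-regeneration site of Γ, i.e. v ≠ 0 and Γ ∩ W_{v,c} ⊆ C^F_{π/2−q}(v) ∪ C^B_{π/2−q}(v). Then the closed ray {t·v : t ≥ 0} from the origin through v intersects Γ exactly in the single point v. -/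
open InnerProductGeometry Real Set Metric Pointwise RealInnerProductSpace

lemma inner_perp (v : EuclideanSpace ℝ (Fin 2)) : ⟪v, perp v⟫ = 0 := by
  simp [perp, PiLp.inner_apply, Fin.sum_univ_two, PiLp.toLp_apply]
  ring

lemma inner_perp' (v : EuclideanSpace ℝ (Fin 2)) : ⟪perp v, v⟫ = 0 := by
  rw [real_inner_comm]; exact inner_perp v

/-- The closed ray from the origin through a `(q,c)`-regeneration site `v` of `Γ`
meets `Γ` exactly in the single point `v`. -/
theorem stmt8 (q c : ℝ) (hq : 0 < q) (hq' : q < π / 2) (hc : 0 < c) (hc' : c < π)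
    (Γ : Set (EuclideanSpace ℝ (Fin 2))) (h0 : (0 : EuclideanSpace ℝ (Fin 2)) ∉ Γ)
    (v : EuclideanSpace ℝ (Fin 2)) (hvΓ : v ∈ Γ) (hv : v ≠ 0)
    (hreg : Γ ∩ coneW v c ⊆ coneF q v ∪ coneB q v) :
    {w : EuclideanSpace ℝ (Fin 2) | ∃ t : ℝ, 0 ≤ t ∧ w = t • v} ∩ Γ = {v} := by
  ext w
  constructor
  · rintro ⟨⟨t, ht, rfl⟩, hwΓ⟩
    rcases eq_or_lt_of_le ht with h0t | h0t
    · exfalso; apply h0; rw [← h0t] at hwΓ; simpa using hwΓ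
    by_contra hwv
    have hwv' : t • v ≠ v := hwv
    have hw0 : t • v ≠ 0 := smul_ne_zero (ne_of_gt h0t) hv
    have hW : t • v ∈ coneW v c := by
      right
      exact ⟨hw0, by rw [angle_smul_left_of_pos _ _ h0t, angle_self hv]; linarith⟩
    have hsub : t • v - v = (t - 1) • v := by
      rw [sub_smul, one_smul]
    have ht1 : t - 1 ≠ 0 := by
      intro h
      apply hwv'
      have : t = 1 := by linarith [sub_eq_zero.mp (by linarith : t - 1 = 0)]
      rw [this, one_smul]
    have hangF : angle (t • v - v) (perp v) = π / 2 := by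
      rw [← inner_eq_zero_iff_angle_eq_pi_div_two, hsub]
      simp [real_inner_smul_left, perp, PiLp.inner_apply, Fin.sum_univ_two]
      ring
    have hangB : angle (t • v - v) (-(perp v)) = π / 2 := by
      rw [← inner_eq_zero_iff_angle_eq_pi_div_two, hsub]
      simp [real_inner_smul_left, perp, PiLp.inner_apply, Fin.sum_univ_two]
      ring
    rcases hreg ⟨hwΓ, hW⟩ with h | h
    · rcases h with h | ⟨_, h⟩
      · exact hwv h
      · rw [hangF] at h; linarith
    · rcases h with h | ⟨_, h⟩
      · exact hwv h
      · rw [hangB] at h; linarith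
  · rintro rfl
    exact ⟨⟨1, zero_le_one, (one_smul ℝ w).symm⟩, hvΓ⟩
end

section
/- Let a, b, c ∈ ℝ² be three pairwise distinct points, let α := ∠(c − a, b − a) be the angle of the triangle at a and β := ∠(c − b, a − b) the angle at b, and suppose α + β ≤ π/2. Then the Lebesgue measure of convexHull ℝ {a, b, c} is at most (1/2)·‖b − a‖²·sin(α + β). -/
open Real InnerProductGeometry MeasureTheory
open scoped RealInnerProductSpace

local notation "E2" => EuclideanSpace ℝ (Fin 2)

lemma trig_key {sa ca sb cb : ℝ} (hsa : 0 ≤ sa) (hsb : 0 ≤ sb) (hca : 0 ≤ ca) (hcb : 0 ≤ cb)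
    (h1 : sa ^ 2 + ca ^ 2 = 1) (h2 : sb ^ 2 + cb ^ 2 = 1)
    (hc : 0 ≤ ca * cb - sa * sb) :
    2 * sa * sb ≤ (sa * cb + ca * sb) ^ 2 := by
  nlinarith [sq_nonneg (sa - sb), sq_nonneg (ca - cb), sq_nonneg (ca*cb - sa*sb),
    mul_nonneg (mul_nonneg hca hcb) (mul_nonneg hsa hsb)]

lemma real_key {nu nv nw sa sb ca cb : ℝ}
    (hnu : 0 < nu) (hnv : 0 ≤ nv) (hnw : 0 ≤ nw)
    (hsa : 0 ≤ sa) (hsb : 0 ≤ sb) (hca : 0 ≤ ca) (hcb : 0 ≤ cb)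
    (h1 : sa ^ 2 + ca ^ 2 = 1) (h2 : sb ^ 2 + cb ^ 2 = 1)
    (hcab : 0 ≤ ca * cb - sa * sb)
    (hproj : nu = ca * nv + cb * nw) (hH : sa * nv = sb * nw) :
    sa * (nv * nu) ≤ 1 / 2 * nu ^ 2 * (sa * cb + ca * sb) := by
  have hkey : 2 * sa * sb ≤ (sa * cb + ca * sb) ^ 2 := trig_key hsa hsb hca hcb h1 h2 hcab
  set S := sa * cb + ca * sb with hS
  have hgoal : 2 * (sa * nv) ≤ nu * S := by
    rcases eq_or_lt_of_le hsa with hsa0 | hsa0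
    · rw [← hsa0]
      have hS0 : 0 ≤ S := by rw [hS, ← hsa0]; positivity
      nlinarith
    rcases eq_or_lt_of_le hsb with hsb0 | hsb0
    · have hz : sa * nv = 0 := by rw [hH, ← hsb0]; ring
      have hS0 : 0 ≤ S := by rw [hS]; positivity
      nlinarith
    · have hid : nu * S * (sa * sb) = (sa * nv) * S ^ 2 := by
        rw [hS]
        linear_combination ((sa*cb + ca*sb) * sa * sb) * hproj
          - ((sa*cb + ca*sb) * cb * sa) * hH
      have hvnn : 0 ≤ sa * nv := by positivity
      nlinarith [mul_le_mul_of_nonneg_left hkey hvnn, mul_pos hsa0 hsb0]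
  nlinarith

/-- If the angles of a triangle at `a` and `b` sum to at most `π/2`, then the area of the
triangle is at most `(1/2)·‖b - a‖²·sin(α + β)`. -/
theorem stmt11 (a b c : EuclideanSpace ℝ (Fin 2))
    (hab : a ≠ b) (hac : a ≠ c) (hbc : b ≠ c)
    (h : angle (c - a) (b - a) + angle (c - b) (a - b) ≤ π / 2) :
    MeasureTheory.volume (convexHull ℝ ({a, b, c} : Set (EuclideanSpace ℝ (Fin 2)))) ≤
      ENNReal.ofReal ((1 / 2) * ‖b - a‖ ^ 2 *
        Real.sin (angle (c - a) (b - a) + angle (c - b) (a - b))) := by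
  haveI : Fact (Module.finrank ℝ E2 = 2) := ⟨finrank_euclideanSpace_fin⟩
  set u : E2 := b - a with hu
  set v : E2 := c - a with hv
  set w : E2 := c - b with hw
  set α := angle (c - a) (b - a) with hα
  set β := angle (c - b) (a - b) with hβ
  -- Step 1: the triangle is contained in the translated parallelepiped
  have hsub : convexHull ℝ ({a, b, c} : Set E2) ⊆ (fun x => a + x) '' parallelepiped ![u, v] := by
    apply convexHull_min
    · intro x hx
      rcases hx with rfl | rfl | rfl
      · exact ⟨0, ⟨(0 : Fin 2 → ℝ), ⟨le_refl _, fun i => zero_le_one⟩, by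
          simp [Fin.sum_univ_two]⟩, by simp⟩
      · refine ⟨u, ⟨![1, 0], ⟨?_, ?_⟩, ?_⟩, by simp [hu]⟩
        · intro i; fin_cases i <;> norm_num
        · intro i; fin_cases i <;> norm_num
        · simp [Fin.sum_univ_two]
      · refine ⟨v, ⟨![0, 1], ⟨?_, ?_⟩, ?_⟩, by simp [hv]⟩
        · intro i; fin_cases i <;> norm_num
        · intro i; fin_cases i <;> norm_num
        · simp [Fin.sum_univ_two]
    · exact (convex_parallelepiped ![u, v]).translate a
  -- Step 2: the measure of the translated parallelepiped
  set o : Orientation ℝ E2 (Fin 2) := (EuclideanSpace.basisFun (Fin 2) ℝ).toBasis.orientation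
    with ho
  have himg : volume ((fun x => a + x) '' parallelepiped ![u, v])
      = volume (parallelepiped ![u, v]) := by
    rw [Set.image_add_left, measure_preimage_add]
  have hpar : volume (parallelepiped ![u, v]) = ENNReal.ofReal |o.volumeForm ![u, v]| := by
    rw [← o.measure_eq_volume, AlternatingMap.measure_parallelepiped]
  -- Step 3: identify |volumeForm| with the area form and sines of angles
  have hvf : o.volumeForm ![u, v] = o.areaForm u v := (o.areaForm_to_volumeForm u v).symm
  have hsq : o.areaForm u v ^ 2 = ‖u‖ ^ 2 * ‖v‖ ^ 2 - ⟪u, v⟫ ^ 2 := by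
    have := o.inner_sq_add_areaForm_sq u v; linarith
  have hsinα : Real.sin α * (‖v‖ * ‖u‖) = |o.areaForm u v| := by
    rw [hα, sin_angle_mul_norm_mul_norm]
    rw [← hv, ← hu, ← Real.sqrt_sq_eq_abs]
    congr 1
    rw [hsq, real_inner_self_eq_norm_sq, real_inner_self_eq_norm_sq, real_inner_comm]
    ring
  have hab' : (a - b : E2) = -u := by rw [hu]; abel
  have hβ' : β = angle w (-u) := by rw [hβ, hw, ← hab']
  have hsinβ : Real.sin β * (‖w‖ * ‖u‖) = |o.areaForm u v| := by
    have h2 := sin_angle_mul_norm_mul_norm w (-u)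
    rw [norm_neg] at h2
    rw [hβ', h2]
    have h1 : o.areaForm w (-u) = o.areaForm u v := by
      have hwvu : w = v - u := by rw [hw, hv, hu]; abel
      rw [hwvu]; simp [map_sub, o.areaForm_swap v u]
    rw [← Real.sqrt_sq_eq_abs]
    congr 1
    have hsq2 : o.areaForm w (-u) ^ 2 = ‖w‖ ^ 2 * ‖-u‖ ^ 2 - ⟪w, -u⟫ ^ 2 := by
      have := o.inner_sq_add_areaForm_sq w (-u); linarith
    rw [← h1, hsq2, real_inner_self_eq_norm_sq, real_inner_self_eq_norm_sq, norm_neg,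
      inner_neg_right]
    ring
  have hcosα : Real.cos α * (‖v‖ * ‖u‖) = ⟪v, u⟫ := by
    rw [hα, ← hv, ← hu]; exact cos_angle_mul_norm_mul_norm _ _
  have hcosβ : Real.cos β * (‖w‖ * ‖u‖) = -⟪w, u⟫ := by
    rw [hβ']
    have := cos_angle_mul_norm_mul_norm w (-u)
    rwa [norm_neg, inner_neg_right] at this
  -- projection identity
  have hune : ‖u‖ ≠ 0 := by
    simp only [norm_ne_zero_iff, hu, sub_ne_zero]; exact fun hh => hab hh.symm
  have hupos : 0 < ‖u‖ := lt_of_le_of_ne (norm_nonneg u) (Ne.symm hune)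
  have hproj : ‖u‖ = Real.cos α * ‖v‖ + Real.cos β * ‖w‖ := by
    have huvw : ⟪u, u⟫ = ⟪v, u⟫ - ⟪w, u⟫ := by
      rw [← inner_sub_left]
      congr 1
      rw [hu, hv, hw]; abel
    have : ‖u‖ * ‖u‖ = (Real.cos α * ‖v‖ + Real.cos β * ‖w‖) * ‖u‖ := by
      rw [← real_inner_self_eq_norm_mul_norm, huvw]
      linear_combination -hcosα - hcosβ
    exact mul_right_cancel₀ hune this
  -- angle ranges
  have hα0 : 0 ≤ α := angle_nonneg _ _
  have hβ0 : 0 ≤ β := angle_nonneg _ _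
  have hαβ : α + β ≤ π / 2 := h
  have hsa : 0 ≤ Real.sin α := Real.sin_nonneg_of_nonneg_of_le_pi hα0 (angle_le_pi _ _)
  have hsb : 0 ≤ Real.sin β := Real.sin_nonneg_of_nonneg_of_le_pi hβ0 (angle_le_pi _ _)
  have hca : 0 ≤ Real.cos α := Real.cos_nonneg_of_mem_Icc
    ⟨by linarith [pi_pos], by linarith⟩
  have hcb : 0 ≤ Real.cos β := Real.cos_nonneg_of_mem_Icc
    ⟨by linarith [pi_pos], by linarith⟩
  have hcab : 0 ≤ Real.cos (α + β) := Real.cos_nonneg_of_mem_Icc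
    ⟨by linarith [pi_pos], hαβ⟩
  rw [Real.cos_add] at hcab
  have hkey : 2 * Real.sin α * Real.sin β ≤
      (Real.sin α * Real.cos β + Real.cos α * Real.sin β) ^ 2 :=
    trig_key hsa hsb hca hcb (Real.sin_sq_add_cos_sq α) (Real.sin_sq_add_cos_sq β) hcab
  -- the main real inequality
  have hH : Real.sin α * ‖v‖ = Real.sin β * ‖w‖ := by
    have h3 : Real.sin α * ‖v‖ * ‖u‖ = Real.sin β * ‖w‖ * ‖u‖ := by
      rw [mul_assoc, mul_assoc, hsinα, hsinβ]
    exact mul_right_cancel₀ hune h3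
  have hmain : Real.sin α * (‖v‖ * ‖u‖) ≤ 1 / 2 * ‖u‖ ^ 2 *
      (Real.sin α * Real.cos β + Real.cos α * Real.sin β) :=
    real_key hupos (norm_nonneg v) (norm_nonneg w) hsa hsb hca hcb
      (Real.sin_sq_add_cos_sq α) (Real.sin_sq_add_cos_sq β) hcab hproj hH
  calc volume (convexHull ℝ ({a, b, c} : Set E2))
      ≤ volume ((fun x => a + x) '' parallelepiped ![u, v]) := measure_mono hsub
    _ = ENNReal.ofReal |o.volumeForm ![u, v]| := by rw [himg, hpar]
    _ ≤ ENNReal.ofReal ((1 / 2) * ‖u‖ ^ 2 * Real.sin (α + β)) := by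
        apply ENNReal.ofReal_le_ofReal
        rw [Real.sin_add, hvf, ← hsinα]
        exact hmain
    _ = _ := rfl
end

section
/- Let K ⊆ ℝ² be a compact convex set with 0 ∈ interior(K). Let m := min{z₁ : z ∈ K} be the minimal first coordinate over K, and suppose this minimum is attained at a unique point p ∈ K. Then for every δ > 0 there exists ε ∈ (0,1) such that every z ∈ (1+ε)•K with z₁ ≤ (1−ε)·m satisfies |z₂ − p₂| ≤ δ. -/
open Pointwise

lemma coord_abs_le_norm (w : EuclideanSpace ℝ (Fin 2)) (i : Fin 2) : |w i| ≤ ‖w‖ := by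
  rw [EuclideanSpace.norm_eq, ← Real.sqrt_sq_eq_abs]
  apply Real.sqrt_le_sqrt
  have h := Finset.single_le_sum (f := fun j => ‖w j‖ ^ 2)
    (fun j _ => sq_nonneg _) (Finset.mem_univ i)
  simpa [Real.norm_eq_abs, sq_abs] using h

/-- Stability of the leftmost point of a compact convex planar body under dilation:
if the minimal first coordinate over `K` is attained at the unique point `p`, then for
every `δ > 0` there is `ε ∈ (0,1)` such that every point of `(1+ε)•K` whose first
coordinate is at most `(1-ε)` times the minimum has second coordinate within `δ`
of that of `p`. -/
theorem stmt16 (K : Set (EuclideanSpace ℝ (Fin 2))) (hK : IsCompact K) (hKc : Convex ℝ K)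
    (h0 : (0 : EuclideanSpace ℝ (Fin 2)) ∈ interior K)
    (p : EuclideanSpace ℝ (Fin 2)) (hp : p ∈ K)
    (hmin : ∀ z ∈ K, p 0 ≤ z 0)
    (huniq : ∀ z ∈ K, z 0 = p 0 → z = p)
    (δ : ℝ) (hδ : 0 < δ) :
    ∃ ε : ℝ, 0 < ε ∧ ε < 1 ∧
      ∀ z ∈ (1 + ε) • K, z 0 ≤ (1 - ε) * p 0 → |z 1 - p 1| ≤ δ := by
  -- K is bounded
  obtain ⟨M, hM⟩ := hK.isBounded.exists_norm_le
  have hM0 : 0 ≤ M := le_trans (norm_nonneg p) (hM p hp)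
  -- p 0 < 0
  have hm : p 0 < 0 := by
    obtain ⟨r, hr, hball⟩ := Metric.mem_nhds_iff.mp (mem_interior_iff_mem_nhds.mp h0)
    have hx : EuclideanSpace.single (0 : Fin 2) (-r/2) ∈ K := by
      apply hball
      simp only [Metric.mem_ball, dist_zero_right, EuclideanSpace.norm_single,
        Real.norm_eq_abs]
      rw [abs_of_neg (by linarith)]
      linarith
    have := hmin _ hx
    simp only [EuclideanSpace.single_apply] at this
    norm_num at this
    linarith
  -- key stability step
  have key : ∃ t > 0, ∀ w ∈ K, w 0 ≤ p 0 + t → |w 1 - p 1| ≤ δ / 2 := by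
    by_contra h
    push_neg at h
    set A : ℕ → Set (EuclideanSpace ℝ (Fin 2)) :=
      fun n => {w ∈ K | w 0 ≤ p 0 + 1 / (n + 1) ∧ δ / 2 ≤ |w 1 - p 1|} with hA
    have hclosed : ∀ n, IsClosed (A n) := by
      intro n
      apply IsClosed.inter hK.isClosed
      apply IsClosed.inter
      · exact isClosed_le (EuclideanSpace.proj (0 : Fin 2)).continuous continuous_const
      · exact isClosed_le continuous_const
          (((EuclideanSpace.proj (1 : Fin 2)).continuous.sub continuous_const).abs)
    have hne : ∀ n, (A n).Nonempty := by
      intro n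
      obtain ⟨w, hw, hw0, hw1⟩ := h (1 / (n + 1)) (by positivity)
      exact ⟨w, hw, hw0, hw1.le⟩
    have hsub : ∀ n, A (n + 1) ⊆ A n := by
      intro n w ⟨hw, hw0, hw1⟩
      refine ⟨hw, le_trans hw0 ?_, hw1⟩
      have : (1 : ℝ) / (n + 1 + 1) ≤ 1 / (n + 1) := by
        apply one_div_le_one_div_of_le <;> push_cast <;> linarith
      push_cast
      linarith
    obtain ⟨w, hw⟩ := IsCompact.nonempty_iInter_of_sequence_nonempty_isCompact_isClosed
      A hsub hne (hK.of_isClosed_subset (hclosed 0) (fun x hx => hx.1)) hclosed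
    simp only [Set.mem_iInter] at hw
    have hwK : w ∈ K := (hw 0).1
    have hw0 : w 0 ≤ p 0 := by
      refine le_of_forall_pos_le_add fun η hη => ?_
      obtain ⟨n, hn⟩ := exists_nat_one_div_lt hη
      have := (hw n).2.1
      push_cast at this hn ⊢
      linarith
    have hwp : w = p := huniq w hwK (le_antisymm hw0 (hmin w hwK))
    have h2 := (hw 0).2.2
    rw [hwp] at h2
    simp at h2
    linarith
  obtain ⟨t, ht, hstab⟩ := key
  -- choose ε
  refine ⟨min (min (1/2) (t / (2 * (-p 0)))) (δ / (2 * (M + 1))), ?_, ?_, ?_⟩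
  · exact lt_min (lt_min (by norm_num) (div_pos ht (by linarith))) (div_pos hδ (by linarith))
  · calc min (min (1/2) (t / (2 * (-p 0)))) (δ / (2 * (M + 1)))
        ≤ 1/2 := le_trans (min_le_left _ _) (min_le_left _ _)
      _ < 1 := by norm_num
  · set ε := min (min (1/2) (t / (2 * (-p 0)))) (δ / (2 * (M + 1))) with hε
    have hε0 : 0 < ε :=
      lt_min (lt_min (by norm_num) (div_pos ht (by linarith))) (div_pos hδ (by linarith))
    have hεt : 2 * ε * (-p 0) ≤ t := by
      have h1 : ε ≤ t / (2 * (-p 0)) := le_trans (min_le_left _ _) (min_le_right _ _)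
      rw [le_div_iff₀ (by linarith)] at h1
      nlinarith
    have hεδ : ε * (M + 1) ≤ δ / 2 := by
      have h1 : ε ≤ δ / (2 * (M + 1)) := min_le_right _ _
      rw [le_div_iff₀ (by linarith)] at h1
      linarith
    rintro z ⟨w, hwK, rfl⟩ hz0
    replace hz0 : (1 + ε) * w 0 ≤ (1 - ε) * p 0 := hz0
    show |(1 + ε) * w 1 - p 1| ≤ δ
    have hw0 : w 0 ≤ p 0 + t := by nlinarith
    have hw1 := hstab w hwK hw0
    have hwn : |w 1| ≤ M := le_trans (coord_abs_le_norm w 1) (hM w hwK)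
    have heq : (1 + ε) * w 1 - p 1 = (w 1 - p 1) + ε * w 1 := by ring
    rw [heq]
    calc |(w 1 - p 1) + ε * w 1| ≤ |w 1 - p 1| + |ε * w 1| := abs_add_le _ _
      _ ≤ δ / 2 + ε * M := by
          rw [abs_mul, abs_of_pos hε0]
          have : ε * |w 1| ≤ ε * M := by nlinarith
          linarith
      _ ≤ δ := by nlinarith
end
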